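/- arXiv:1406.0690 — 7 statements merged into one kernel-verified Lean document; each statement's English description precedes it below -/
import Mathlib

section
/- Exponential state complexity of upward closure over a binary alphabet: for every even n > 0, the language L_n = {c(i)^n | i ∈ H} over Σ = {a,b} is such that every DFA recognizing the upward closure ↑L_n has at least binomial(n+1, n/2) states, i.e., nD(↑L_n) ≥ C(n+1, n/2). -/
/-- An accepting run of an NFA on a word `w`: a sequence of `|w|+1` states starting
in an initial state, ending in an accepting state, and following the transitions. -/
def NFA.IsAcceptingRun {α σ : Type*} (M : NFA α σ) (w : List α)
    (r : Fin (w.length + 1) → σ) : Prop :=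
  r 0 ∈ M.start ∧ r (Fin.last w.length) ∈ M.accept ∧
    ∀ i : Fin w.length, r i.succ ∈ M.step (r i.castSucc) (w.get i)

/-- An NFA is unambiguous (a UFA) if every word has at most one accepting run. -/
def NFA.Unambiguous {α σ : Type*} (M : NFA α σ) : Prop :=
  ∀ (w : List α) (r₁ r₂ : Fin (w.length + 1) → σ),
    M.IsAcceptingRun w r₁ → M.IsAcceptingRun w r₂ → r₁ = r₂

/-- A deterministic NFA (a DFA with a possibly partial transition function):
exactly one initial state and at most one successor per state and letter. -/
def NFA.Deterministic {α σ : Type*} (M : NFA α σ) : Prop :=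
  (∃ q₀, M.start = {q₀}) ∧ ∀ q a, (M.step q a).Subsingleton

/-- Minimal number of states of an NFA recognizing `L` (`nN(L)`). -/
noncomputable def nN {α : Type} (L : Language α) : ℕ :=
  sInf {n | ∃ (σ : Type) (inst : Fintype σ) (M : NFA α σ),
    @Fintype.card σ inst = n ∧ M.accepts = L}

/-- Minimal number of states of a DFA (partial transition function allowed)
recognizing `L` (`nD(L)`). -/
noncomputable def nD {α : Type} (L : Language α) : ℕ :=
  sInf {n | ∃ (σ : Type) (inst : Fintype σ) (M : NFA α σ),
    M.Deterministic ∧ @Fintype.card σ inst = n ∧ M.accepts = L}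

/-- Minimal number of states of an unambiguous NFA recognizing `L` (`nU(L)`). -/
noncomputable def nU {α : Type} (L : Language α) : ℕ :=
  sInf {n | ∃ (σ : Type) (inst : Fintype σ) (M : NFA α σ),
    M.Unambiguous ∧ @Fintype.card σ inst = n ∧ M.accepts = L}

/-- Upward closure: all superwords (w.r.t. the scattered-subword ordering
`List.Sublist`) of words of `L`. -/
def upClosure {α : Type} (L : Language α) : Language α := {x | ∃ y ∈ L, y.Sublist x}

/-- Downward closure: all subwords of words of `L`. -/
def downClosure {α : Type} (L : Language α) : Language α := {x | ∃ y ∈ L, x.Sublist y}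

/-- Upward interior: words all of whose superwords are in `L`. -/
def upInterior {α : Type} (L : Language α) : Language α := {x | ∀ y, x.Sublist y → y ∈ L}

/-- Downward interior: words all of whose subwords are in `L`. -/
def downInterior {α : Type} (L : Language α) : Language α := {x | ∀ y, y.Sublist x → y ∈ L}

/-- The word `c(i) = a^i b^(3n-i)` over the binary alphabet `Fin 2`
(`0` is the letter `a`, `1` is the letter `b`). -/
def cw (n i : ℕ) : List (Fin 2) := List.replicate i 0 ++ List.replicate (3*n - i) 1

/-- The morphism `c : H* → Σ*`, applied to a word `s` over `H ⊆ ℕ`. -/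
def cword (n : ℕ) (s : List ℕ) : List (Fin 2) := (s.map (cw n)).flatten

/-- The morphism `d : H* → Σ*`, where `d(i) = c(i)c(i)`. -/
def dword (n : ℕ) (s : List ℕ) : List (Fin 2) := (s.map (fun i => cw n i ++ cw n i)).flatten

/-- The witness language `L_n = { c(i)^n | i ∈ H }` with `H = {n, …, 2n}`. -/
def Lwit (n : ℕ) : Language (Fin 2) :=
  {w | ∃ i ∈ Finset.Icc n (2*n), w = (List.replicate n (cw n i)).flatten}

section Aux
lemma cw_length {n i : ℕ} (h : i ≤ 3*n) : (cw n i).length = 3*n := by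
  simp [cw]; omega

lemma cword_cons (n u : ℕ) (l : List ℕ) : cword n (u :: l) = cw n u ++ cword n l := by
  simp [cword]

lemma cword_append (n : ℕ) (l₁ l₂ : List ℕ) :
    cword n (l₁ ++ l₂) = cword n l₁ ++ cword n l₂ := by
  simp [cword]

lemma cword_length {n : ℕ} {l : List ℕ} (h : ∀ u ∈ l, u ≤ 3*n) :
    (cword n l).length = 3*n*l.length := by
  induction l with
  | nil => simp [cword]
  | cons u l ih =>
    rw [cword_cons, List.length_append, cw_length (h u (by simp)),
      ih (fun v hv => h v (by simp [hv])), List.length_cons, Nat.mul_succ]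
    omega

lemma cw_getD {n i : ℕ} (h : i ≤ 3*n) (p : ℕ) (hp : p < 3*n) :
    (cw n i).getD p 0 = if p < i then 0 else 1 := by
  unfold cw
  rcases lt_or_ge p i with h1 | h1
  · rw [if_pos h1, List.getD_append _ _ _ p (by simpa using h1)]
    simp [List.getD, List.getElem?_replicate, h1]
  · rw [if_neg (by omega), List.getD_append_right _ _ _ p (by simpa using h1)]
    simp only [List.length_replicate]
    have h2 : p - i < 3*n - i := by omega
    simp [List.getD, List.getElem?_replicate, h2]

lemma cword_getD {n : ℕ} {l : List ℕ} (h : ∀ u ∈ l, u ≤ 3*n) (p : ℕ)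
    (hp : p < 3*n*l.length) :
    (cword n l).getD p 0 = if p % (3*n) < l.getD (p/(3*n)) 0 then 0 else 1 := by
  have hn : 0 < 3*n := by
    rcases Nat.eq_zero_or_pos n with rfl | hn
    · simp at hp
    · omega
  induction l generalizing p with
  | nil => simp at hp
  | cons u l ih =>
    have hu : u ≤ 3*n := h u (by simp)
    have hl : ∀ v ∈ l, v ≤ 3*n := fun v hv => h v (by simp [hv])
    rw [cword_cons]
    rcases lt_or_ge p (3*n) with h1 | h1
    · have hdiv : p / (3*n) = 0 := Nat.div_eq_of_lt h1
      have hmod : p % (3*n) = p := Nat.mod_eq_of_lt h1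
      rw [List.getD_append _ _ _ p (by rw [cw_length hu]; exact h1), cw_getD hu p h1,
        hdiv, hmod]
      simp
    · have hlen : (cw n u).length = 3*n := cw_length hu
      have hp' : p - 3*n < 3*n*l.length := by
        rw [List.length_cons, Nat.mul_succ] at hp; omega
      rw [List.getD_append_right _ _ _ p (by omega), hlen, ih hl (p - 3*n) hp']
      have e2 : (p - 3*n) % (3*n) = p % (3*n) := by
        conv_rhs => rw [show p = (p - 3*n) + 3*n by omega]
        simp
      have e3 : p / (3*n) = (p - 3*n)/(3*n) + 1 := by
        conv_lhs => rw [show p = (p - 3*n) + 1*(3*n) by omega]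
        rw [Nat.add_mul_div_right _ _ hn]
      rw [e2, e3]
      simp

lemma oe_gap {L1 L2 : ℕ} (f : Fin L1 ↪o Fin L2) :
    ∀ (k q : ℕ) (h : q + k < L1), (f ⟨q, by omega⟩ : ℕ) + k ≤ (f ⟨q+k, h⟩ : ℕ) := by
  intro k
  induction k with
  | zero => intro q h; simp
  | succ k ih =>
    intro q h
    have h1 : q + k < L1 := by omega
    have h2 : (f ⟨q+k, h1⟩ : ℕ) < (f ⟨q+(k+1), h⟩ : ℕ) := by
      exact f.strictMono (show (⟨q+k,h1⟩ : Fin L1) < ⟨q+(k+1), h⟩ by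
        simp [Fin.lt_def])
    have h3 := ih q h1
    omega

lemma count_getD (l : List ℕ) (i : ℕ) :
    ∑ u ∈ Finset.range l.length, (if l.getD u 0 = i then 1 else 0) = l.count i := by
  induction l with
  | nil => simp
  | cons a l ih =>
    rw [List.length_cons, Finset.sum_range_succ']
    simp only [List.getD_cons_succ, List.getD_cons_zero, ih, List.count_cons]
    by_cases h : a = i <;> simp [h, beq_iff_eq]

theorem key_lemma {n i m : ℕ} (hi1 : 1 ≤ i) (hi2 : i < 3*n)
    {l : List ℕ} (hl : ∀ u ∈ l, u ≤ 3*n)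
    (h : (cword n (List.replicate m i)).Sublist (cword n l)) :
    2*m ≤ l.length + l.count i := by
  classical
  have hn : 0 < 3*n := by omega
  have hrep : ∀ u ∈ List.replicate m i, u ≤ 3*n := by
    intro u hu; rw [List.eq_of_mem_replicate hu]; omega
  have L1e : (cword n (List.replicate m i)).length = 3*n*m := by
    rw [cword_length hrep, List.length_replicate]
  have L2e : (cword n l).length = 3*n*l.length := cword_length hl
  obtain ⟨f, hf⟩ := List.sublist_iff_exists_fin_orderEmbedding_get_eq.mp h
  -- the position map
  set F : ℕ → ℕ := fun q => if hq : q < (cword n (List.replicate m i)).length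
    then (f ⟨q, hq⟩ : ℕ) else 0 with hF
  have Fval : ∀ (q : ℕ) (hq : q < (cword n (List.replicate m i)).length),
      F q = (f ⟨q, hq⟩ : ℕ) := by
    intro q hq; simp [hF, dif_pos hq]
  have Fbound : ∀ q, q < 3*n*m → F q < 3*n*l.length := by
    intro q hq
    rw [Fval q (by omega)]
    rw [← L2e]
    exact (f ⟨q, by omega⟩).isLt
  have Fmono : ∀ q q', q < q' → q' < 3*n*m → F q < F q' := by
    intro q q' hlt hq'
    rw [Fval q (by omega), Fval q' (by omega)]
    exact f.strictMono (by simp [Fin.lt_def, hlt])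
  have Fgap : ∀ q k, q + k < 3*n*m → F q + k ≤ F (q + k) := by
    intro q k hk
    rw [Fval q (by omega), Fval (q+k) (by omega)]
    exact oe_gap f k q (by omega)
  -- letters
  have Fletter : ∀ q, q < 3*n*m →
      ((q % (3*n) < i) ↔ (F q % (3*n) < l.getD (F q / (3*n)) 0)) := by
    intro q hq
    have hq1 : q < (cword n (List.replicate m i)).length := by omega
    have hget := hf ⟨q, hq1⟩
    have e1 : (cword n (List.replicate m i)).get ⟨q, hq1⟩
        = (cword n (List.replicate m i)).getD q 0 := by
      rw [List.getD_eq_getElem _ _ hq1]; rfl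
    have e2 : (cword n l).get (f ⟨q, hq1⟩) = (cword n l).getD (F q) 0 := by
      rw [Fval q hq1, List.get_eq_getElem]
      exact (List.getD_eq_getElem (cword n l) 0 (f ⟨q,hq1⟩).isLt).symm
    rw [e1, e2] at hget
    rw [cword_getD hrep q (by rwa [List.length_replicate]),
      cword_getD hl (F q) (Fbound q hq)] at hget
    have hdivm : q / (3*n) < m := by
      rw [Nat.div_lt_iff_lt_mul hn]
      have : 3*n*m = m*(3*n) := by ring
      omega
    have e3 : (List.replicate m i).getD (q / (3*n)) 0 = i := by
      rw [List.getD_eq_getElem _ _ (by simpa using hdivm)]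
      simp
    rw [e3] at hget
    constructor
    · intro hlt
      by_contra hnot
      rw [if_pos hlt, if_neg hnot] at hget
      exact absurd hget (by decide)
    · intro hlt
      by_contra hnot
      rw [if_neg hnot, if_pos hlt] at hget
      exact absurd hget (by decide)
  -- block indices
  set FB : ℕ → ℕ := fun t => F (3*n*t) / (3*n) with hFB
  set EB : ℕ → ℕ := fun t => F (3*n*t + (3*n-1)) / (3*n) with hEB
  have hpos : ∀ t, t < m → 3*n*t + (3*n-1) < 3*n*m := by
    intro t ht
    have hmul : 3*n*(t+1) ≤ 3*n*m := Nat.mul_le_mul_left _ (by omega)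
    rw [Nat.mul_succ] at hmul; omega
  have blkmono : ∀ q q', q ≤ q' → q' < 3*n*m → F q / (3*n) ≤ F q' / (3*n) := by
    intro q q' hle hq'
    rcases eq_or_lt_of_le hle with rfl | hlt
    · exact le_refl _
    · exact Nat.div_le_div_right (Fmono q q' hlt hq').le
  have letter_a : ∀ q, q < 3*n*m → q % (3*n) < i → F q % (3*n) < l.getD (F q / (3*n)) 0 :=
    fun q hq hmod => (Fletter q hq).mp hmod
  have letter_b : ∀ q, q < 3*n*m → ¬(q % (3*n) < i) →
      l.getD (F q / (3*n)) 0 ≤ F q % (3*n) := by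
    intro q hq hmod
    by_contra hc
    exact hmod ((Fletter q hq).mpr (by omega))
  have mod_a : ∀ t, (3*n*t) % (3*n) = 0 := fun t => Nat.mul_mod_right _ _
  have mod_b : ∀ t, (3*n*t + (3*n-1)) % (3*n) = 3*n-1 := by
    intro t
    rw [Nat.mul_add_mod]
    exact Nat.mod_eq_of_lt (by omega)
  have la : ∀ t, t < m → F (3*n*t) % (3*n) < l.getD (FB t) 0 := by
    intro t ht
    exact letter_a _ (by have := hpos t ht; omega) (by rw [mod_a]; omega)
  have lb : ∀ t, t < m → l.getD (EB t) 0 ≤ F (3*n*t + (3*n-1)) % (3*n) := by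
    intro t ht
    exact letter_b _ (hpos t ht) (by rw [mod_b]; omega)
  have hFE : ∀ t, t < m → FB t ≤ EB t := by
    intro t ht
    exact blkmono _ _ (by omega) (hpos t ht)
  have hElen : ∀ t, t < m → EB t < l.length := by
    intro t ht
    have h1 := Fbound _ (hpos t ht)
    have h2 : 3*n*l.length = l.length * (3*n) := by ring
    have h3 : F (3*n*t + (3*n-1)) / (3*n) < l.length := by
      rw [Nat.div_lt_iff_lt_mul hn]; omega
    exact h3
  have hsep : ∀ t, t + 1 < m → EB t < FB (t+1) := by
    intro t ht
    by_contra hc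
    have hq2lt : 3*n*(t+1) < 3*n*m := (Nat.mul_lt_mul_left hn).mpr (by omega)
    have h1 : EB t ≤ FB (t+1) := blkmono _ _ (by rw [Nat.mul_succ]; omega) hq2lt
    have hval : EB t = FB (t+1) := le_antisymm h1 (not_lt.mp hc)
    have heq : F (3*n*t + (3*n-1)) / (3*n) = F (3*n*(t+1)) / (3*n) := hval
    have hx := Nat.div_add_mod (F (3*n*t + (3*n-1))) (3*n)
    have hy := Nat.div_add_mod (F (3*n*(t+1))) (3*n)
    rw [heq] at hx
    have hlt : F (3*n*t + (3*n-1)) < F (3*n*(t+1)) := by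
      apply Fmono _ _ (by rw [Nat.mul_succ]; omega) hq2lt
    have h2 := lb t (by omega)
    have h3 := la (t+1) ht
    rw [hval] at h2
    omega
  have hsep' : ∀ t t', t < t' → t' < m → EB t < FB t' := by
    intro t t' hlt ht'
    have h1 : EB t < FB (t+1) := hsep t (by omega)
    have h2 : FB (t+1) ≤ FB t' := blkmono _ _ (Nat.mul_le_mul_left _ (by omega))
        (by have := hpos t' ht'; omega)
    omega
  have hsingle : ∀ t, t < m → FB t = EB t → l.getD (FB t) 0 = i := by
    intro t ht heq
    have hq1 : 3*n*t + (3*n-1) < 3*n*m := hpos t ht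
    have hila : 3*n*t + (i-1) < 3*n*m := by omega
    have hifb : 3*n*t + i < 3*n*m := by omega
    -- blocks of intermediate positions equal FB t
    have bla : F (3*n*t + (i-1)) / (3*n) = FB t := by
      have h1 : FB t ≤ F (3*n*t + (i-1)) / (3*n) := blkmono _ _ (by omega) hila
      have h2 : F (3*n*t + (i-1)) / (3*n) ≤ EB t := blkmono _ _ (by omega) hq1
      omega
    have bfb : F (3*n*t + i) / (3*n) = FB t := by
      have h1 : FB t ≤ F (3*n*t + i) / (3*n) := blkmono _ _ (by omega) hifb
      have h2 : F (3*n*t + i) / (3*n) ≤ EB t := blkmono _ _ (by omega) hq1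
      omega
    -- letters
    have hla : F (3*n*t + (i-1)) % (3*n) < l.getD (FB t) 0 := by
      have := letter_a (3*n*t + (i-1)) hila
        (by rw [Nat.mul_add_mod, Nat.mod_eq_of_lt (by omega)]; omega)
      rwa [bla] at this
    have hfb : l.getD (FB t) 0 ≤ F (3*n*t + i) % (3*n) := by
      have := letter_b (3*n*t + i) hifb
        (by rw [Nat.mul_add_mod, Nat.mod_eq_of_lt (by omega)]; omega)
      rwa [bfb] at this
    -- gaps
    have g1 : F (3*n*t) + (i-1) ≤ F (3*n*t + (i-1)) := Fgap _ _ hila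
    have g2 : F (3*n*t + i) + (3*n-1-i) ≤ F (3*n*t + (3*n-1)) := by
      have := Fgap (3*n*t + i) (3*n-1-i) (by omega)
      have e : 3*n*t + i + (3*n-1-i) = 3*n*t + (3*n-1) := by omega
      rwa [e] at this
    -- decompositions
    have d0 := Nat.div_add_mod (F (3*n*t)) (3*n)
    have dla := Nat.div_add_mod (F (3*n*t + (i-1))) (3*n)
    have dfb := Nat.div_add_mod (F (3*n*t + i)) (3*n)
    have d1 := Nat.div_add_mod (F (3*n*t + (3*n-1))) (3*n)
    have dm : F (3*n*t + (3*n-1)) % (3*n) < 3*n := Nat.mod_lt _ hn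
    rw [bla] at dla
    rw [bfb] at dfb
    have e0 : F (3*n*t) / (3*n) = FB t := rfl
    rw [e0] at d0
    have e1 : F (3*n*t + (3*n-1)) / (3*n) = EB t := rfl
    rw [e1, ← heq] at d1
    omega
  -- counting
  have hcard2 : ∀ t : Fin m, ({FB t.1, EB t.1} : Finset ℕ).card
      = if FB t.1 = EB t.1 then 1 else 2 := by
    intro t
    by_cases hte : FB t.1 = EB t.1
    · simp [hte]
    · rw [if_neg hte]
      exact Finset.card_pair hte
  have hdisj : ∀ t : Fin m, ∀ t' : Fin m, t ≠ t' →
      Disjoint ({FB t.1, EB t.1} : Finset ℕ) ({FB t'.1, EB t'.1} : Finset ℕ) := by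
    have haux : ∀ t t' : Fin m, t < t' →
        Disjoint ({FB t.1, EB t.1} : Finset ℕ) ({FB t'.1, EB t'.1} : Finset ℕ) := by
      intro t t' hlt
      rw [Finset.disjoint_left]
      intro x hx hx'
      have h1 : EB t.1 < FB t'.1 := hsep' t.1 t'.1 hlt t'.2
      have h2 : FB t.1 ≤ EB t.1 := hFE t.1 t.2
      have h3 : FB t'.1 ≤ EB t'.1 := hFE t'.1 t'.2
      simp only [Finset.mem_insert, Finset.mem_singleton] at hx hx'
      rcases hx with rfl | rfl <;> rcases hx' with h | h <;> omega
    intro t t' hne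
    rcases lt_or_gt_of_ne hne with hlt | hlt
    · exact haux t t' hlt
    · exact (haux t' t hlt).symm
  have hbiu := Finset.card_biUnion (s := (Finset.univ : Finset (Fin m)))
    (t := fun t => ({FB t.1, EB t.1} : Finset ℕ)) (fun x _ y _ h => hdisj x y h)
  have hsub : (Finset.univ.biUnion fun t : Fin m => ({FB t.1, EB t.1} : Finset ℕ))
      ⊆ Finset.range l.length := by
    intro x hx
    rw [Finset.mem_biUnion] at hx
    obtain ⟨t, -, hx⟩ := hx
    simp only [Finset.mem_insert, Finset.mem_singleton] at hx
    have h1 := hFE t.1 t.2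
    have h2 := hElen t.1 t.2
    rw [Finset.mem_range]
    rcases hx with rfl | rfl <;> omega
  have hle1 : ∑ t : Fin m, ({FB t.1, EB t.1} : Finset ℕ).card ≤ l.length := by
    rw [← hbiu]
    simpa using Finset.card_le_card hsub
  set s := Finset.univ.filter (fun t : Fin m => FB t.1 = EB t.1) with hs
  have hsplit := Finset.sum_filter_add_sum_filter_not (Finset.univ : Finset (Fin m))
    (fun t => FB t.1 = EB t.1) (fun t => ({FB t.1, EB t.1} : Finset ℕ).card)
  have hsum1 : ∑ t ∈ s, ({FB t.1, EB t.1} : Finset ℕ).card = s.card := by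
    rw [Finset.card_eq_sum_ones]
    apply Finset.sum_congr rfl
    intro t hts
    rw [hs, Finset.mem_filter] at hts
    rw [hcard2, if_pos hts.2]
  have hsum2 : ∑ t ∈ Finset.univ.filter (fun t : Fin m => ¬ FB t.1 = EB t.1),
      ({FB t.1, EB t.1} : Finset ℕ).card
      = 2 * (Finset.univ.filter (fun t : Fin m => ¬ FB t.1 = EB t.1)).card := by
    rw [Finset.card_eq_sum_ones, Finset.mul_sum]
    apply Finset.sum_congr rfl
    intro t hts
    rw [Finset.mem_filter] at hts
    rw [hcard2, if_neg hts.2]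
    omega
  have hcards : s.card + (Finset.univ.filter (fun t : Fin m => ¬ FB t.1 = EB t.1)).card
      = m := by
    have := Finset.card_filter_add_card_filter_not
      (s := (Finset.univ : Finset (Fin m))) (p := fun t : Fin m => FB t.1 = EB t.1)
    rw [hs]
    simpa using this
  -- s.card ≤ count
  have hinj : s.card ≤ ((Finset.range l.length).filter (fun u => l.getD u 0 = i)).card := by
    apply Finset.card_le_card_of_injOn (fun t => FB t.1)
    · intro t hts
      replace hts : t ∈ s := Finset.mem_coe.mp hts
      rw [hs, Finset.mem_filter] at hts
      rw [Finset.mem_coe, Finset.mem_filter, Finset.mem_range]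
      beta_reduce
      constructor
      · have := hFE t.1 t.2; have := hElen t.1 t.2; omega
      · exact hsingle t.1 t.2 hts.2
    · intro t hts t' hts' heq
      by_contra hne
      have hne' : t ≠ t' := fun h => hne h
      rcases lt_or_gt_of_ne hne' with hlt | hlt
      · have h1 := hsep' t.1 t'.1 hlt t'.2
        have h2 := hFE t.1 t.2
        simp only at heq; omega
      · have h1 := hsep' t'.1 t.1 hlt t.2
        have h2 := hFE t'.1 t'.2
        simp only at heq; omega
  have hcnt : ((Finset.range l.length).filter (fun u => l.getD u 0 = i)).card
      = l.count i := by
    rw [Finset.card_filter]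
    exact count_getD l i
  rw [hsum1, hsum2] at hsplit
  omega

lemma cw_sub_double {n j s : ℕ} (hj1 : n ≤ j) (hj2 : j ≤ 2*n) (hs1 : n ≤ s)
    (hs2 : s ≤ 2*n) : (cw n j).Sublist (cw n s ++ cw n s) := by
  unfold cw
  rcases le_or_gt j s with hle | hlt
  · have e1 : 3*n-j = (3*n-s)+(s-j) := by omega
    rw [e1, List.replicate_add, ← List.append_assoc]
    have h1 : (List.replicate j (0:Fin 2) ++ List.replicate (3*n-s) 1).Sublist
        (List.replicate s 0 ++ List.replicate (3*n-s) 1) :=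
      List.Sublist.append ((List.replicate_sublist_replicate _).2 hle) (List.Sublist.refl _)
    have h2 : (List.replicate (s-j) (1:Fin 2)).Sublist
        (List.replicate s 0 ++ List.replicate (3*n-s) 1) :=
      List.sublist_append_of_sublist_right ((List.replicate_sublist_replicate _).2 (by omega))
    exact h1.append h2
  · have e1 : List.replicate j (0:Fin 2) = List.replicate s 0 ++ List.replicate (j-s) 0 := by
      rw [← List.replicate_add]; congr 1; omega
    rw [e1, List.append_assoc, List.append_assoc]
    apply List.Sublist.append (List.Sublist.refl _)
    have h2 : (List.replicate (j-s) (0:Fin 2)).Sublist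
        (List.replicate (3*n-s) 1 ++ List.replicate s 0) :=
      List.sublist_append_of_sublist_right ((List.replicate_sublist_replicate _).2 (by omega))
    have h3 : (List.replicate (3*n-j) (1:Fin 2)).Sublist (List.replicate (3*n-s) 1) :=
      (List.replicate_sublist_replicate _).2 (by omega)
    have := h2.append h3
    simpa [List.append_assoc] using this
lemma rep_sub_doubled {n j : ℕ} (hj1 : n ≤ j) (hj2 : j ≤ 2*n) :
    ∀ P : List ℕ, (∀ p ∈ P, n ≤ p ∧ p ≤ 2*n) →
    (cword n (List.replicate P.length j)).Sublist (cword n (P.flatMap fun p => [p,p])) := by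
  intro P
  induction P with
  | nil => intro _; simp [cword]
  | cons p P ih =>
    intro hP
    have hp := hP p (by simp)
    rw [List.length_cons, List.replicate_succ, cword_cons, List.flatMap_cons]
    have e1 : (([p,p] : List ℕ) ++ P.flatMap fun p => [p,p]) =
        p :: p :: (P.flatMap fun p => [p,p]) := by simp
    rw [e1, cword_cons, cword_cons, ← List.append_assoc]
    exact (cw_sub_double hj1 hj2 hp.1 hp.2).append (ih (fun q hq => hP q (by simp [hq])))

lemma rep_sub_doubled_mem {n j : ℕ} (hj1 : n ≤ j) (hj2 : j ≤ 2*n) :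
    ∀ P : List ℕ, (∀ p ∈ P, n ≤ p ∧ p ≤ 2*n) → j ∈ P →
    (cword n (List.replicate (P.length + 1) j)).Sublist
      (cword n (P.flatMap fun p => [p,p])) := by
  intro P
  induction P with
  | nil => intro _ h; simp at h
  | cons p P ih =>
    intro hP hmem
    rw [List.length_cons, List.flatMap_cons]
    have e1 : (([p,p] : List ℕ) ++ P.flatMap fun p => [p,p]) =
        p :: p :: (P.flatMap fun p => [p,p]) := by simp
    rw [e1, cword_cons, cword_cons]
    by_cases hpj : p = j
    · subst hpj
      rw [show P.length + 1 + 1 = P.length + 2 by rfl, List.replicate_succ,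
        List.replicate_succ, cword_cons, cword_cons]
      exact List.Sublist.append (List.Sublist.refl _)
        (List.Sublist.append (List.Sublist.refl _)
          (rep_sub_doubled hj1 hj2 P (fun q hq => hP q (by simp [hq]))))
    · have hmem' : j ∈ P := by
        rcases List.mem_cons.mp hmem with h | h
        · exact absurd h.symm hpj
        · exact h
      rw [show P.length + 1 + 1 = (P.length + 1) + 1 by rfl, List.replicate_succ,
        cword_cons, ← List.append_assoc]
      have hp := hP p (by simp)
      exact (cw_sub_double hj1 hj2 hp.1 hp.2).append
        (ih (fun q hq => hP q (by simp [hq])) hmem')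

lemma nfa_evalFrom_append {α σ : Type*} (M : NFA α σ) (S : Set σ) (x y : List α) :
    M.evalFrom S (x ++ y) = M.evalFrom (M.evalFrom S x) y := by
  simp [NFA.evalFrom, List.foldl_append]

lemma nfa_evalFrom_empty {α σ : Type*} (M : NFA α σ) (y : List α) :
    M.evalFrom ∅ y = ∅ := by
  induction y with
  | nil => rfl
  | cons a y ih =>
    have : M.evalFrom ∅ (a :: y) = M.evalFrom (M.stepSet ∅ a) y := rfl
    rw [this, NFA.stepSet_empty, ih]

lemma nfa_eval_append {α σ : Type*} (M : NFA α σ) (x y : List α) :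
    M.eval (x ++ y) = M.evalFrom (M.eval x) y :=
  nfa_evalFrom_append M M.start x y

lemma det_eval_subsingleton {α σ : Type*} (M : NFA α σ) (h : M.Deterministic)
    (w : List α) : (M.eval w).Subsingleton := by
  induction w using List.reverseRecOn with
  | nil =>
    obtain ⟨q₀, hq₀⟩ := h.1
    rw [NFA.eval_nil, hq₀]
    exact Set.subsingleton_singleton
  | append_singleton x a ih =>
    rw [NFA.eval_append_singleton]
    intro q hq q' hq'
    rw [NFA.mem_stepSet] at hq hq'
    obtain ⟨s, hs, hstep⟩ := hq
    obtain ⟨s', hs', hstep'⟩ := hq'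
    rw [ih hs hs'] at hstep
    exact h.2 s' a hstep hstep'

lemma len_doubled (P : List ℕ) : (P.flatMap fun p => [p,p]).length = 2 * P.length := by
  induction P with
  | nil => simp
  | cons p P ih => rw [List.flatMap_cons, List.length_append, ih]; simp; omega

lemma count_doubled (P : List ℕ) (i : ℕ) :
    (P.flatMap fun p => [p,p]).count i = 2 * P.count i := by
  induction P with
  | nil => simp
  | cons p P ih =>
    rw [List.flatMap_cons, List.count_append, ih, List.count_cons, List.count_cons,
      List.count_cons, List.count_nil]
    by_cases h : p = i <;> simp [h] <;> omega

theorem dfa_lb {n : ℕ} (hpos : 0 < n) (heven : Even n) {σ : Type} [Fintype σ]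
    (M : NFA (Fin 2) σ) (hdet : M.Deterministic)
    (hacc : M.accepts = upClosure (Lwit n)) :
    (n+1).choose (n/2) ≤ Fintype.card σ := by
  classical
  obtain ⟨k, hk⟩ := heven
  have hk2 : n = 2*k := by omega
  have hkpos : 1 ≤ k := by omega
  have hn2 : n/2 = k := by omega
  rw [hn2]
  set H' : Finset ℕ := Finset.Icc n (2*n) with hH
  set ι : Finset (Finset ℕ) := Finset.powersetCard k H' with hι
  -- the words
  set u : Finset ℕ → List (Fin 2) := fun S =>
    cword n (S.toList.take 1 ++ (S.toList.drop 1).flatMap fun p => [p,p]) with hu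
  -- decomposition of S.toList
  have hdecomp : ∀ S ∈ ι, ∃ t P, S.toList = t :: P ∧ P.length + 1 = k ∧
      (∀ p ∈ S.toList, n ≤ p ∧ p ≤ 2*n) ∧ (t :: P).Nodup := by
    intro S hS
    rw [hι, Finset.mem_powersetCard] at hS
    have hlen : S.toList.length = k := by rw [Finset.length_toList, hS.2]
    have hmem : ∀ p ∈ S.toList, n ≤ p ∧ p ≤ 2*n := by
      intro p hp
      rw [Finset.mem_toList] at hp
      have := hS.1 hp
      rw [hH, Finset.mem_Icc] at this
      exact this
    obtain ⟨t, P, hTP⟩ := List.exists_cons_of_ne_nil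
      (List.ne_nil_of_length_pos (by omega : 0 < S.toList.length))
    refine ⟨t, P, hTP, ?_, hmem, ?_⟩
    · rw [hTP] at hlen; simp at hlen; omega
    · have := Finset.nodup_toList S
      rwa [hTP] at this
  -- membership word
  have hmemword : ∀ S ∈ ι, ∀ j ∈ S,
      u S ++ cword n (List.replicate k j) ∈ upClosure (Lwit n) := by
    intro S hS j hj
    obtain ⟨t, P, hSl, hPlen, hmem, hnd⟩ := hdecomp S hS
    have hjl : j ∈ S.toList := Finset.mem_toList.mpr hj
    have hjH := hmem j hjl
    refine ⟨(List.replicate n (cw n j)).flatten, ⟨j, Finset.mem_Icc.mpr ⟨hjH.1, hjH.2⟩, rfl⟩, ?_⟩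
    have e0 : (List.replicate n (cw n j)).flatten = cword n (List.replicate n j) := by
      simp [cword]
    rw [e0]
    have e1 : List.replicate n j = List.replicate k j ++ List.replicate k j := by
      rw [← List.replicate_add, show k + k = n from hk.symm]
    rw [e1, cword_append]
    apply List.Sublist.append _ (List.Sublist.refl _)
    -- cword n (replicate k j) <+ u S
    rw [hu]
    simp only [hSl, List.take_cons, List.take_zero, List.drop_succ_cons,
      List.drop_zero, List.take, List.drop]
    rw [cword_append]
    have hPH : ∀ p ∈ P, n ≤ p ∧ p ≤ 2*n := fun p hp => hmem p (by rw [hSl]; simp [hp])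
    rcases List.mem_cons.mp (by rwa [hSl] at hjl) with rfl | hjP
    · have e2 : List.replicate k j = j :: List.replicate P.length j := by
        rw [← hPlen, List.replicate_succ]
      have e3 : cword n [j] = cw n j := by simp [cword]
      rw [e2, cword_cons, e3]
      exact List.Sublist.append (List.Sublist.refl _)
        (rep_sub_doubled hjH.1 hjH.2 P hPH)
    · apply List.sublist_append_of_sublist_right
      have := rep_sub_doubled_mem hjH.1 hjH.2 P hPH hjP
      rwa [hPlen] at this
  -- non-membership
  have hnonmem : ∀ T ∈ ι, ∀ j, n ≤ j → j ≤ 2*n → j ∉ T →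
      u T ++ cword n (List.replicate k j) ∉ upClosure (Lwit n) := by
    intro T hT j hj1 hj2 hjT hmem
    obtain ⟨t, P, hTl, hPlen, hmemT, hnd⟩ := hdecomp T hT
    obtain ⟨y, ⟨i, hiIcc, rfl⟩, hsub⟩ := hmem
    rw [Finset.mem_Icc] at hiIcc
    have e0 : (List.replicate n (cw n i)).flatten = cword n (List.replicate n i) := by
      simp [cword]
    rw [e0] at hsub
    set l : List ℕ := (t :: P.flatMap fun p => [p,p]) ++ List.replicate k j with hl
    have hul : u T ++ cword n (List.replicate k j) = cword n l := by
      rw [hu, hl]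
      simp only [hTl, List.take_succ_cons, List.take_zero, List.drop_succ_cons, List.drop_zero]
      simp [cword, List.append_assoc]
    rw [hul] at hsub
    have hlH : ∀ v ∈ l, v ≤ 3*n := by
      intro v hv
      rw [hl] at hv
      rcases List.mem_append.mp hv with hv | hv
      · rcases List.mem_cons.mp hv with rfl | hv
        · have := hmemT v (by rw [hTl]; simp); omega
        · rw [List.mem_flatMap] at hv
          obtain ⟨p, hp, hvp⟩ := hv
          have := hmemT p (by rw [hTl]; simp [hp])
          simp at hvp
          omega
      · rw [List.eq_of_mem_replicate hv]; omega
    have hkey := key_lemma (by omega : 1 ≤ i) (by omega : i < 3*n) hlH hsub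
    -- compute length and count
    have hlen : l.length = 1 + 2*P.length + k := by
      rw [hl]
      rw [List.length_append, List.length_cons, len_doubled, List.length_replicate]
      omega
    have hcnt : l.count i ≤ k := by
      rw [hl, List.count_append, List.count_cons, count_doubled, List.count_replicate]
      have hnP : P.count i ≤ 1 := List.nodup_iff_count_le_one.mp (List.Nodup.of_cons hnd) i
      by_cases hij : i = j
      · subst hij
        have hiT : i ∉ T.val := by exact_mod_cast hjT
        have hiTl : i ∉ T.toList := fun hc => hjT (Finset.mem_toList.mp hc)
        rw [hTl] at hiTl
        have h1 : P.count i = 0 := List.count_eq_zero.mpr (fun hc => hiTl (by simp [hc]))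
        have h2 : ¬ (t = i) := fun hc => hiTl (by simp [hc])
        simp [h1, h2, beq_iff_eq]
      · have hPk : P.length + 1 = k := hPlen
        by_cases ht : t = i
        · have htP : t ∉ P := (List.nodup_cons.mp hnd).1
          have h1 : P.count i = 0 := List.count_eq_zero.mpr (by rw [← ht]; exact htP)
          simp [ht, h1, beq_iff_eq, Ne.symm hij]
          omega
        · have hcl : P.count i ≤ P.length := List.count_le_length
          simp [ht, beq_iff_eq, Ne.symm hij]
          omega
    omega
  -- main injection
  have hlive : ∀ S : {S // S ∈ ι}, (M.eval (u S.1)).Nonempty := by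
    intro ⟨S, hS⟩
    have hScard : S.card = k := (Finset.mem_powersetCard.mp hS).2
    obtain ⟨j, hj⟩ := Finset.card_pos.mp (by omega : 0 < S.card)
    have hmem := hmemword S hS j hj
    rw [← hacc] at hmem
    obtain ⟨q, hq, hqe⟩ := hmem
    rw [nfa_eval_append] at hqe
    by_contra hne
    rw [Set.not_nonempty_iff_eq_empty] at hne
    rw [hne, nfa_evalFrom_empty] at hqe
    exact hqe
  set f : {S // S ∈ ι} → σ := fun S => (hlive S).some with hf
  have hinj : Function.Injective f := by
    intro S T hST
    by_contra hne
    have hSTne : S.1 ≠ T.1 := fun h => hne (Subtype.ext h)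
    -- find j ∈ S \ T
    have hcardS : S.1.card = k := (Finset.mem_powersetCard.mp S.2).2
    have hcardT : T.1.card = k := (Finset.mem_powersetCard.mp T.2).2
    have hnsub : ¬ S.1 ⊆ T.1 := by
      intro hsub
      exact hSTne (Finset.eq_of_subset_of_card_le hsub (by omega))
    obtain ⟨j, hjS, hjT⟩ := Finset.not_subset.mp hnsub
    have hjH : n ≤ j ∧ j ≤ 2*n := by
      have := (Finset.mem_powersetCard.mp S.2).1 hjS
      rw [hH, Finset.mem_Icc] at this
      exact this
    -- equal residuals
    have hsame : ∀ z, (u S.1 ++ z ∈ M.accepts) ↔ (u T.1 ++ z ∈ M.accepts) := by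
      intro z
      have hqS : M.eval (u S.1) = {f S} := by
        apply Set.eq_singleton_iff_unique_mem.mpr
        exact ⟨(hlive S).some_mem, fun x hx => det_eval_subsingleton M hdet _ hx (hlive S).some_mem⟩
      have hqT : M.eval (u T.1) = {f T} := by
        apply Set.eq_singleton_iff_unique_mem.mpr
        exact ⟨(hlive T).some_mem, fun x hx => det_eval_subsingleton M hdet _ hx (hlive T).some_mem⟩
      constructor <;> intro hmem <;> obtain ⟨q, hq, hqe⟩ := hmem
      · refine ⟨q, hq, ?_⟩
        rw [nfa_eval_append] at hqe ⊢
        rw [hqT, ← hST, ← hqS]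
        exact hqe
      · refine ⟨q, hq, ?_⟩
        rw [nfa_eval_append] at hqe ⊢
        rw [hqS, hST, ← hqT]
        exact hqe
    have h1 : u S.1 ++ cword n (List.replicate k j) ∈ M.accepts := by
      rw [hacc]
      exact hmemword S.1 S.2 j hjS
    have h2 : u T.1 ++ cword n (List.replicate k j) ∉ M.accepts := by
      rw [hacc]
      exact hnonmem T.1 T.2 j hjH.1 hjH.2 hjT
    exact h2 ((hsame _).mp h1)
  have hcard := Fintype.card_le_of_injective f hinj
  rw [Fintype.card_coe, hι, Finset.card_powersetCard, hH, Nat.card_Icc] at hcard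
  have : 2*n + 1 - n = n + 1 := by omega
  rwa [this] at hcard

def Wt (n : ℕ) (d : Fin (n+1)) : List (Fin 2) := cword n (List.replicate n (n + (d:ℕ)))

lemma Wt_length {n : ℕ} (d : Fin (n+1)) : (Wt n d).length = 3*n*n := by
  rw [Wt, cword_length, List.length_replicate]
  intro u hu; rw [List.eq_of_mem_replicate hu]; have := d.isLt; omega

def upNFA (n : ℕ) : NFA (Fin 2) (Fin (n+1) × Fin (3*n*n+1)) where
  step s x := {s' | s'.1 = s.1 ∧ ((s'.2 : ℕ) = (s.2 : ℕ) ∨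
    ((s'.2 : ℕ) = (s.2 : ℕ) + 1 ∧ ∃ h : (s.2:ℕ) < (Wt n s.1).length,
      (Wt n s.1).get ⟨(s.2:ℕ), h⟩ = x))}
  start := {s | (s.2 : ℕ) = 0}
  accept := {s | (s.2 : ℕ) = 3*n*n}

lemma upNFA_eval (n : ℕ) (hn : 0 < n) (x : List (Fin 2)) :
    (upNFA n).eval x = {s | ((Wt n s.1).take (s.2:ℕ)).Sublist x} := by
  induction x using List.reverseRecOn with
  | nil =>
    ext s
    show (s.2:ℕ) = 0 ↔ _
    simp only [Set.mem_setOf_eq, List.sublist_nil, List.take_eq_nil_iff]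
    constructor
    · intro h; exact Or.inl h
    · rintro (h | h)
      · exact h
      · exfalso
        have h2 := Wt_length s.1
        rw [h] at h2
        simp at h2
        omega
  | append_singleton x a ih =>
    rw [NFA.eval_append_singleton, ih]
    ext s
    rw [NFA.mem_stepSet]
    simp only [Set.mem_setOf_eq]
    constructor
    · rintro ⟨s0, hs0, heq1, heq2 | ⟨heq2, hlt, hget⟩⟩
      · have e : (Wt n s.1).take (s.2:ℕ) = (Wt n s0.1).take (s0.2:ℕ) := by
          rw [heq1, heq2]
        rw [e]
        exact hs0.trans (List.sublist_append_left x [a])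
      · have e : (Wt n s.1).take (s.2:ℕ)
            = (Wt n s0.1).take (s0.2:ℕ) ++ [(Wt n s0.1).get ⟨(s0.2:ℕ), hlt⟩] := by
          rw [heq1, heq2, List.take_succ, List.getElem?_eq_getElem hlt]
          rfl
        rw [e, hget]
        exact List.Sublist.append hs0 (List.Sublist.refl [a])
    · intro hsub
      obtain ⟨l₁, l₂, hsplit, hsub1, hsub2⟩ := List.sublist_append_iff.mp hsub
      rcases List.sublist_singleton.mp hsub2 with rfl | rfl
      · -- stay
        rw [List.append_nil] at hsplit
        exact ⟨s, by rw [← hsplit] at hsub1; exact hsub1, rfl, Or.inl rfl⟩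
      · -- advance
        have hp : (s.2:ℕ) ≤ 3*n*n := by have := s.2.isLt; omega
        have hlen1 : ((Wt n s.1).take (s.2:ℕ)).length = (s.2:ℕ) := by
          rw [List.length_take, Wt_length]; omega
        have hpos2 : 0 < (s.2:ℕ) := by
          have := congrArg List.length hsplit
          simp at this
          omega
        set p : ℕ := (s.2:ℕ) - 1 with hpdef
        have hplt : p < (Wt n s.1).length := by rw [Wt_length]; omega
        have htake : (Wt n s.1).take (s.2:ℕ)
            = (Wt n s.1).take p ++ [(Wt n s.1).get ⟨p, hplt⟩] := by
          rw [show (s.2:ℕ) = p + 1 by omega, List.take_succ, List.getElem?_eq_getElem hplt]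
          rfl
        rw [htake] at hsplit
        obtain ⟨he1, he2⟩ := List.append_inj' hsplit.symm (by simp)
        have hget : (Wt n s.1).get ⟨p, hplt⟩ = a := by
          have := congrArg (fun l => l.headI) he2
          simpa using this.symm
        refine ⟨(s.1, ⟨p, by omega⟩), ?_, rfl, Or.inr ⟨by simp; omega, by simpa using hplt,
          by simpa using hget⟩⟩
        show ((Wt n s.1).take p).Sublist x
        rw [he1] at hsub1
        exact hsub1

lemma upNFA_accepts (n : ℕ) (hn : 0 < n) :
    (upNFA n).accepts = upClosure (Lwit n) := by
  ext x
  show (∃ s ∈ (upNFA n).accept, s ∈ (upNFA n).eval x) ↔ _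
  rw [upNFA_eval n hn]
  constructor
  · rintro ⟨s, hacc, hev⟩
    have hacc' : (s.2:ℕ) = 3*n*n := hacc
    rw [Set.mem_setOf_eq] at hev
    rw [hacc', List.take_of_length_le (by rw [Wt_length])] at hev
    refine ⟨Wt n s.1, ⟨n + (s.1:ℕ), Finset.mem_Icc.mpr ⟨by omega, by have := s.1.isLt; omega⟩, ?_⟩, hev⟩
    rw [Wt]
    simp [cword]
  · rintro ⟨y, ⟨i, hiIcc, rfl⟩, hsub⟩
    rw [Finset.mem_Icc] at hiIcc
    refine ⟨(⟨i - n, by omega⟩, ⟨3*n*n, by omega⟩), rfl, ?_⟩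
    rw [Set.mem_setOf_eq]
    have e1 : Wt n ⟨i - n, by omega⟩ = (List.replicate n (cw n i)).flatten := by
      rw [Wt]
      simp only [show n + (i - n) = i by omega]
      simp [cword]
    have e2 : ((Wt n ⟨i - n, by omega⟩).take (3*n*n)) = Wt n ⟨i - n, by omega⟩ := by
      rw [← Wt_length ⟨i - n, by omega⟩, List.take_length]
    rw [e2, e1]
    exact hsub

end Aux
/-- Exponential state complexity of upward closure over a binary alphabet: for even
`n > 0`, every DFA recognizing `↑L_n`, where `L_n = { c(i)^n | i ∈ H }`, has at
least `C(n+1, n/2)` states. -/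
theorem upClosure_binary_lower_bound (n : ℕ) (hpos : 0 < n) (heven : Even n) :
    (n + 1).choose (n / 2) ≤ nD (upClosure (Lwit n)) := by
  apply le_csInf
  · refine ⟨Fintype.card (Set (Fin (n+1) × Fin (3*n*n+1))),
      Set (Fin (n+1) × Fin (3*n*n+1)), inferInstance, (upNFA n).toDFA.toNFA, ?_, rfl, ?_⟩
    · constructor
      · exact ⟨(upNFA n).toDFA.start, rfl⟩
      · intro q a
        show ({(upNFA n).toDFA.step q a} : Set _).Subsingleton
        exact Set.subsingleton_singleton
    · rw [DFA.toNFA_correct, NFA.toDFA_correct]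
      exact upNFA_accepts n hpos
  · rintro m ⟨σ, inst, M, hdet, hcard, hacc⟩
    rw [← hcard]
    exact @dfa_lb n hpos heven σ inst M hdet hacc
end

section
/- Let σ ∈ H* and i ∈ H. The smallest ℓ such that c(σ) is a subword of c(i)^ℓ is θ_i(σ); that is, c(σ) ⊑ c(i)^{θ_i(σ)} and, if θ_i(σ) > 0, c(σ) is not a subword of c(i)^{θ_i(σ)−1}. -/
section ThetaAux
open List (Sublist)
local infixl:50 " <+ " => List.Sublist

private lemma rep_subl {c : Fin 2} {a b : ℕ} (h : a ≤ b) :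
    List.replicate a c <+ List.replicate b c :=
  (List.replicate_sublist_replicate c).mpr h

private lemma Wadd (n i a b : ℕ) :
    (List.replicate (a + b) (cw n i)).flatten
      = (List.replicate a (cw n i)).flatten ++ (List.replicate b (cw n i)).flatten := by
  rw [List.replicate_add, List.flatten_append]

private lemma Wsucc (n i t : ℕ) :
    (List.replicate (t + 1) (cw n i)).flatten
      = cw n i ++ (List.replicate t (cw n i)).flatten := by
  rw [List.replicate_succ, List.flatten_cons]

private lemma ne_cons_of_rep {c d : Fin 2} (hcd : c ≠ d) {q : ℕ} (hq : 1 ≤ q)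
    (z r : List (Fin 2)) : List.replicate q c ++ z ≠ d :: r := by
  rcases q with _ | q
  · omega
  · rw [List.replicate_succ, List.cons_append]
    intro hcon
    injection hcon with h1 _
    exact hcd h1

private lemma sublist_drop_replicate {c : Fin 2} {x : List (Fin 2)}
    (hx : ∀ r : List (Fin 2), x ≠ c :: r) :
    ∀ (m : ℕ) {y : List (Fin 2)}, x <+ List.replicate m c ++ y → x <+ y := by
  intro m
  induction m with
  | zero => intro y h; simpa using h
  | succ m ih =>
    intro y h
    rw [List.replicate_succ, List.cons_append] at h
    rcases List.sublist_cons_iff.mp h with h' | ⟨r, hr, _⟩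
    · exact ih h'
    · exact absurd hr (hx r)

private lemma cw_sublist_two (n i p : ℕ) (hn : 1 ≤ n) (hni : n ≤ i) (hin : i ≤ 2*n)
    (hnp : n ≤ p) (hpn : p ≤ 2*n) :
    cw n p <+ cw n i ++ cw n i := by
  unfold cw
  rcases le_or_gt p i with hle | hlt
  · have h1 : List.replicate p (0 : Fin 2) <+ List.replicate i 0 := rep_subl hle
    have h3 : List.replicate (i - p) (1 : Fin 2)
        <+ List.replicate i (0 : Fin 2) ++ List.replicate (3*n - i) 1 :=
      List.sublist_append_of_sublist_right (rep_subl (by omega))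
    have h2 : List.replicate (3*n - p) (1 : Fin 2)
        <+ List.replicate (3*n - i) 1
            ++ (List.replicate i (0 : Fin 2) ++ List.replicate (3*n - i) 1) := by
      have he : 3*n - p = (3*n - i) + (i - p) := by omega
      rw [he, List.replicate_add]
      exact List.Sublist.append (List.Sublist.refl _) h3
    have h := List.Sublist.append h1 h2
    simpa [List.append_assoc] using h
  · have h1 : List.replicate (p - i) (0 : Fin 2) ++ List.replicate (3*n - p) (1 : Fin 2)
        <+ List.replicate i (0 : Fin 2) ++ List.replicate (3*n - i) 1 :=
      List.Sublist.append (rep_subl (by omega)) (rep_subl (by omega))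
    have h2 : List.replicate (p - i) (0 : Fin 2) ++ List.replicate (3*n - p) (1 : Fin 2)
        <+ List.replicate (3*n - i) (1 : Fin 2)
            ++ (List.replicate i (0 : Fin 2) ++ List.replicate (3*n - i) 1) :=
      List.sublist_append_of_sublist_right h1
    have hsplit : List.replicate p (0 : Fin 2)
        = List.replicate i 0 ++ List.replicate (p - i) 0 := by
      rw [← List.replicate_add]; congr 1; omega
    rw [hsplit]
    have h := List.Sublist.append (List.Sublist.refl (List.replicate i (0 : Fin 2))) h2
    calc (List.replicate i (0:Fin 2) ++ List.replicate (p-i) 0) ++ List.replicate (3*n-p) 1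
        = List.replicate i (0:Fin 2)
            ++ (List.replicate (p-i) 0 ++ List.replicate (3*n-p) 1) := by
          rw [List.append_assoc]
      _ <+ List.replicate i (0:Fin 2) ++ (List.replicate (3*n-i) 1
            ++ (List.replicate i (0:Fin 2) ++ List.replicate (3*n-i) 1)) := h
      _ = (List.replicate i (0:Fin 2) ++ List.replicate (3*n-i) 1)
            ++ (List.replicate i (0:Fin 2) ++ List.replicate (3*n-i) 1) := by
          simp [List.append_assoc]

private lemma block_step (n i : ℕ) (hn : 1 ≤ n) (hni : n ≤ i) (hin : i ≤ 2*n)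
    {p : ℕ} (hnp : n ≤ p) (hpn : p ≤ 2*n)
    {y : List (Fin 2)} (hy : y = [] ∨ ∃ r, y = (0 : Fin 2) :: r)
    {t : ℕ} (h : cw n p ++ y <+ (List.replicate t (cw n i)).flatten) :
    ∃ t', t = t' + (if p = i then 1 else 2)
      ∧ y <+ (List.replicate t' (cw n i)).flatten := by
  have hdropy : ∀ (m : ℕ) {z : List (Fin 2)},
      y <+ List.replicate m (1 : Fin 2) ++ z → y <+ z := by
    intro m z hz
    rcases hy with rfl | ⟨r, rfl⟩
    · exact List.nil_sublist _
    · exact sublist_drop_replicate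
        (fun r' hr' => by injection hr' with h1 _; exact absurd h1 (by decide)) m hz
  rcases t with _ | t
  · exfalso
    have hlen := h.length_le
    simp [cw] at hlen
    omega
  rcases eq_or_ne p i with rfl | hne
  · -- p = i : block costs 1
    rw [Wsucc] at h
    replace h := (List.append_sublist_append_left _).mp h
    exact ⟨t, by rw [if_pos rfl], h⟩
  · -- p ≠ i : block costs 2
    rcases t with _ | t
    · -- t = 1 : impossible
      exfalso
      rw [Wsucc] at h
      simp only [List.replicate_zero, List.flatten_nil, List.append_nil] at h
      have h0 := h.count_le 0
      have h1 := h.count_le 1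
      simp [cw, List.count_append, List.count_replicate] at h0 h1
      omega
    rw [Wsucc, Wsucc] at h
    generalize hW : (List.replicate t (cw n i)).flatten = Z at h
    refine ⟨t, by rw [if_neg hne], ?_⟩
    rw [hW]
    obtain ⟨Z2, hZ2⟩ : ∃ Z2, cw n i ++ Z = Z2 := ⟨_, rfl⟩
    rw [hZ2] at h
    unfold cw at h
    rcases lt_or_gt_of_ne hne with hlt | hgt
    · -- p < i, first copy
      have hsplit : List.replicate i (0 : Fin 2)
          = List.replicate p 0 ++ List.replicate (i - p) 0 := by
        rw [← List.replicate_add]; congr 1; omega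
      rw [hsplit] at h
      simp only [List.append_assoc] at h
      replace h := (List.append_sublist_append_left _).mp h
      replace h := sublist_drop_replicate
        (fun r => ne_cons_of_rep (by decide) (by omega) y r) _ h
      have hsplit2 : List.replicate (3*n - p) (1 : Fin 2)
          = List.replicate (3*n - i) 1 ++ List.replicate (i - p) 1 := by
        rw [← List.replicate_add]; congr 1; omega
      rw [hsplit2, List.append_assoc] at h
      replace h := (List.append_sublist_append_left _).mp h
      -- h : rep (i-p) 1 ++ y <+ Z2 ; second copy
      rw [← hZ2] at h
      unfold cw at h
      simp only [List.append_assoc] at h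
      replace h := sublist_drop_replicate
        (fun r => ne_cons_of_rep (by decide) (by omega) y r) _ h
      have hsplit3 : List.replicate (3*n - i) (1 : Fin 2)
          = List.replicate (i - p) 1 ++ List.replicate (3*n - i - (i - p)) 1 := by
        rw [← List.replicate_add]; congr 1; omega
      rw [hsplit3, List.append_assoc] at h
      replace h := (List.append_sublist_append_left _).mp h
      exact hdropy _ h
    · -- i < p, first copy
      have hsplit : List.replicate p (0 : Fin 2)
          = List.replicate i 0 ++ List.replicate (p - i) 0 := by
        rw [← List.replicate_add]; congr 1; omega
      rw [hsplit] at h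
      simp only [List.append_assoc] at h
      replace h := (List.append_sublist_append_left _).mp h
      replace h := sublist_drop_replicate
        (fun r => ne_cons_of_rep (by decide) (by omega) _ r) _ h
      -- h : rep (p-i) 0 ++ (rep (3n-p) 1 ++ y) <+ Z2 ; second copy
      rw [← hZ2] at h
      unfold cw at h
      have hsplit2 : List.replicate i (0 : Fin 2)
          = List.replicate (p - i) 0 ++ List.replicate (i - (p - i)) 0 := by
        rw [← List.replicate_add]; congr 1; omega
      rw [hsplit2] at h
      simp only [List.append_assoc] at h
      replace h := (List.append_sublist_append_left _).mp h
      replace h := sublist_drop_replicate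
        (fun r => ne_cons_of_rep (by decide) (by omega) y r) _ h
      have hsplit3 : List.replicate (3*n - i) (1 : Fin 2)
          = List.replicate (3*n - p) 1 ++ List.replicate (p - i) 1 := by
        rw [← List.replicate_add]; congr 1; omega
      rw [hsplit3, List.append_assoc] at h
      replace h := (List.append_sublist_append_left _).mp h
      exact hdropy _ h

private lemma theta_lower (n i : ℕ) (hn : 1 ≤ n) (hni : n ≤ i) (hin : i ≤ 2*n) :
    ∀ (s : List ℕ), (∀ p ∈ s, n ≤ p ∧ p ≤ 2*n) → ∀ t,
      cword n s <+ (List.replicate t (cw n i)).flatten →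
      2 * s.length - s.count i ≤ t := by
  intro s
  induction s with
  | nil => intro _ t _; simp
  | cons p s ih =>
    intro hmem t h
    have hp := hmem p (by simp)
    have hrest : ∀ q ∈ s, n ≤ q ∧ q ≤ 2*n := fun q hq => hmem q (List.mem_cons_of_mem _ hq)
    have hcc : cword n (p :: s) = cw n p ++ cword n s := by simp [cword]
    rw [hcc] at h
    have hy : cword n s = [] ∨ ∃ r, cword n s = (0 : Fin 2) :: r := by
      cases s with
      | nil => left; simp [cword]
      | cons q s' =>
        right
        have hq1 : 1 ≤ q := le_trans hn (hrest q (by simp)).1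
        obtain ⟨q, rfl⟩ : ∃ q', q = q' + 1 := ⟨q - 1, by omega⟩
        refine ⟨List.replicate q 0 ++ List.replicate (3*n - (q+1)) 1 ++ cword n s', ?_⟩
        simp [cword, cw, List.replicate_succ, List.append_assoc]
    obtain ⟨t', rfl, h'⟩ := block_step n i hn hni hin hp.1 hp.2 hy h
    have hIH := ih hrest t' h'
    have hcl : s.count i ≤ s.length := List.count_le_length
    rcases eq_or_ne p i with rfl | hne
    · rw [List.count_cons_self, List.length_cons, if_pos rfl]
      omega
    · rw [List.length_cons, List.count_cons_of_ne hne, if_neg hne]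
      omega

private lemma theta_upper (n i : ℕ) (hn : 1 ≤ n) (hni : n ≤ i) (hin : i ≤ 2*n) :
    ∀ (s : List ℕ), (∀ p ∈ s, n ≤ p ∧ p ≤ 2*n) →
      cword n s <+ (List.replicate (2 * s.length - s.count i) (cw n i)).flatten := by
  intro s
  induction s with
  | nil => simp [cword]
  | cons p s ih =>
    intro hmem
    have hp := hmem p (by simp)
    have hrest : ∀ q ∈ s, n ≤ q ∧ q ≤ 2*n := fun q hq => hmem q (List.mem_cons_of_mem _ hq)
    have hcl : s.count i ≤ s.length := List.count_le_length
    have heq : 2 * (p :: s).length - (p :: s).count i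
        = (if p = i then 1 else 2) + (2 * s.length - s.count i) := by
      rcases eq_or_ne p i with rfl | hne
      · rw [List.count_cons_self, List.length_cons, if_pos rfl]; omega
      · rw [List.length_cons, List.count_cons_of_ne hne, if_neg hne]; omega
    rw [heq, Wadd]
    have hcc : cword n (p :: s) = cw n p ++ cword n s := by simp [cword]
    rw [hcc]
    refine List.Sublist.append ?_ (ih hrest)
    rcases eq_or_ne p i with rfl | hne
    · rw [if_pos rfl]
      simp
    · rw [if_neg hne]
      have h2 : (List.replicate 2 (cw n i)).flatten = cw n i ++ cw n i := by
        simp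
      rw [h2]
      exact cw_sublist_two n i p hn hni hin hp.1 hp.2

end ThetaAux

/-- For `σ ∈ H*` and `i ∈ H`, the smallest `ℓ` such that `c(σ)` is a subword of
`c(i)^ℓ` is `θ_i(σ) = 2|σ| - (number of occurrences of i in σ)`: `c(σ)` embeds in
`c(i)^(θ_i(σ))` and, if `θ_i(σ) > 0`, not in `c(i)^(θ_i(σ) - 1)`. -/
theorem subword_of_power_iff_theta (n : ℕ) (hn : 1 ≤ n)
    (i : ℕ) (hi : i ∈ Finset.Icc n (2 * n))
    (s : List ℕ) (hs : ∀ p ∈ s, p ∈ Finset.Icc n (2 * n)) :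
    (cword n s).Sublist (List.replicate (2 * s.length - s.count i) (cw n i)).flatten ∧
    (0 < 2 * s.length - s.count i →
      ¬ (cword n s).Sublist
          (List.replicate (2 * s.length - s.count i - 1) (cw n i)).flatten) := by
  simp only [Finset.mem_Icc] at hi
  have hs' : ∀ p ∈ s, n ≤ p ∧ p ≤ 2*n := fun p hp => by
    have := hs p hp; simpa [Finset.mem_Icc] using this
  constructor
  · exact theta_upper n i hn hi.1 hi.2 s hs'
  · intro hpos hsub
    have := theta_lower n i hn hi.1 hi.2 s hs' _ hsub
    omega
end

section
/- Let n be even and strictly positive, and let X and Y be subsets of H of size n/2 with X ≠ Y. Then there exists a word v ∈ Σ* such that w_X v ∈ ↓L_n and w_Y v ∉ ↓L_n. -/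
/-! ### Auxiliary lemmas -/

private lemma rep_split {α : Type} (x u : ℕ) (a : α) (t w : List α)
    (h : List.replicate x a ++ t = List.replicate u a ++ w) (hxu : x ≤ u) :
    t = List.replicate (u - x) a ++ w := by
  have e : List.replicate u a = List.replicate x a ++ List.replicate (u - x) a := by
    rw [← List.replicate_add]; congr 1; omega
  rw [e, List.append_assoc] at h
  exact List.append_cancel_left h

private lemma rep_rep_clash {y z : ℕ} (hy : 0 < y) (hz : 0 < z) {c d : Fin 2} (hcd : c ≠ d)
    {t w : List (Fin 2)}
    (h : List.replicate y c ++ t = List.replicate z d ++ w) : False := by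
  obtain ⟨y', rfl⟩ : ∃ y', y = y' + 1 := ⟨y - 1, by omega⟩
  obtain ⟨z', rfl⟩ : ∃ z', z = z' + 1 := ⟨z - 1, by omega⟩
  simp only [List.replicate_succ, List.cons_append, List.cons.injEq] at h
  exact hcd h.1

private lemma split_rep {α : Type} (u : List α) : ∀ (m : ℕ) (w : List α),
    w.Sublist (List.replicate m u).flatten →
    ∃ P : List (List α), P.length = m ∧ P.flatten = w ∧ ∀ p ∈ P, p.Sublist u := by
  intro m
  induction m with
  | zero =>
    intro w hw
    simp only [List.replicate_zero, List.flatten_nil, List.sublist_nil] at hw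
    exact ⟨[], by simp [hw]⟩
  | succ m ih =>
    intro w hw
    rw [List.replicate_succ, List.flatten_cons, List.sublist_append_iff] at hw
    obtain ⟨w1, w2, rfl, h1, h2⟩ := hw
    obtain ⟨P, hlen, hfl, hP⟩ := ih w2 h2
    refine ⟨w1 :: P, by simp [hlen], by simp [hfl], ?_⟩
    intro p hp
    rcases List.mem_cons.mp hp with rfl | hp
    · exact h1
    · exact hP p hp

private lemma piece_form {j k : ℕ} {p : List (Fin 2)}
    (h : p.Sublist (List.replicate j (0 : Fin 2) ++ List.replicate k (1 : Fin 2))) :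
    ∃ x y, x ≤ j ∧ y ≤ k ∧ p = List.replicate x (0 : Fin 2) ++ List.replicate y (1 : Fin 2) := by
  rw [List.sublist_append_iff] at h
  obtain ⟨p1, p2, rfl, h1, h2⟩ := h
  have e1 : p1 = List.replicate p1.length (0 : Fin 2) :=
    List.eq_replicate_length.mpr fun b hb => List.eq_of_mem_replicate (h1.subset hb)
  have e2 : p2 = List.replicate p2.length (1 : Fin 2) :=
    List.eq_replicate_length.mpr fun b hb => List.eq_of_mem_replicate (h2.subset hb)
  refine ⟨p1.length, p2.length, ?_, ?_, by rw [← e1, ← e2]⟩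
  · simpa using h1.length_le
  · simpa using h2.length_le

/-- Peeling a block of `a`s off an admissibly split word. -/
private lemma peelA {j k : ℕ} :
    ∀ (P : List (List (Fin 2))) (u : ℕ) (w : List (Fin 2)),
    (∀ p ∈ P, ∃ x y, x ≤ j ∧ y ≤ k ∧
        p = List.replicate x (0 : Fin 2) ++ List.replicate y (1 : Fin 2)) →
    P.flatten = List.replicate u (0 : Fin 2) ++ w →
    (w = [] ∨ ∃ w', w = (1 : Fin 2) :: w') →
    ∃ Q : List (List (Fin 2)),
      (∀ p ∈ Q, ∃ x y, x ≤ j ∧ y ≤ k ∧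
        p = List.replicate x (0 : Fin 2) ++ List.replicate y (1 : Fin 2)) ∧
      Q.flatten = w ∧ Q.length + (if u ≤ j then 0 else 1) ≤ P.length := by
  intro P
  induction P with
  | nil =>
    intro u w _ hfl hw
    simp only [List.flatten_nil] at hfl
    rcases List.append_eq_nil_iff.mp hfl.symm with ⟨h1, h2⟩
    have hu : u = 0 := by simpa using congrArg List.length h1
    refine ⟨[], by simp, by simp [h2], ?_⟩
    simp [hu]
  | cons p P' ih =>
    intro u w hAdm hfl hw
    obtain ⟨x, y, hxj, hyk, rfl⟩ := hAdm p List.mem_cons_self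
    have hAdm' : ∀ p ∈ P', ∃ x y, x ≤ j ∧ y ≤ k ∧
        p = List.replicate x (0 : Fin 2) ++ List.replicate y (1 : Fin 2) :=
      fun q hq => hAdm q (by simp [hq])
    rw [List.flatten_cons, List.append_assoc] at hfl
    by_cases hy : y = 0
    · subst hy
      simp only [List.replicate_zero, List.nil_append] at hfl
      rcases le_or_gt x u with hxu | hux
      · have hfl' := rep_split x u 0 _ _ hfl hxu
        obtain ⟨Q, hQ, hQfl, hQlen⟩ := ih (u - x) w hAdm' hfl' hw
        refine ⟨Q, hQ, hQfl, ?_⟩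
        simp only [List.length_cons]
        split_ifs at hQlen ⊢ <;> omega
      · have hfl' := rep_split u x 0 _ _ hfl.symm (le_of_lt hux)
        exfalso
        rcases hw with rfl | ⟨w', rfl⟩
        · rcases List.append_eq_nil_iff.mp hfl'.symm with ⟨h1, _⟩
          have : x - u = 0 := by simpa using congrArg List.length h1
          omega
        · exact rep_rep_clash (by omega) (by omega) (by decide)
            (hfl'.symm.trans (by simp [List.replicate_succ]) :
              List.replicate (x - u) (0 : Fin 2) ++ P'.flatten
                = List.replicate 1 (1 : Fin 2) ++ w')
    · have hy' : 0 < y := Nat.pos_of_ne_zero hy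
      rcases lt_trichotomy x u with h | rfl | h
      · exfalso
        have hfl' := rep_split x u 0 _ _ hfl (le_of_lt h)
        exact rep_rep_clash hy' (by omega) (by decide) hfl'
      · have hfl' : List.replicate y (1 : Fin 2) ++ P'.flatten = w :=
          List.append_cancel_left hfl
        refine ⟨List.replicate y (1 : Fin 2) :: P', ?_, by simpa using hfl', ?_⟩
        · intro q hq
          rcases List.mem_cons.mp hq with rfl | hq
          · exact ⟨0, y, by omega, hyk, by simp⟩
          · exact hAdm' q hq
        · simp [hxj]
      · exfalso
        have hfl' := rep_split u x 0 _ _ hfl.symm (le_of_lt h)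
        rcases hw with rfl | ⟨w', rfl⟩
        · rcases List.append_eq_nil_iff.mp hfl'.symm with ⟨h1, _⟩
          have : x - u = 0 := by simpa using congrArg List.length h1
          omega
        · exact rep_rep_clash (by omega) (by omega) (by decide)
            (hfl'.symm.trans (by simp [List.replicate_succ]) :
              List.replicate (x - u) (0 : Fin 2) ++ _
                = List.replicate 1 (1 : Fin 2) ++ w')

/-- Peeling a block of `b`s off an admissibly split word. -/
private lemma peelB {j k : ℕ} :
    ∀ (P : List (List (Fin 2))) (z : ℕ) (w : List (Fin 2)),
    (∀ p ∈ P, ∃ x y, x ≤ j ∧ y ≤ k ∧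
        p = List.replicate x (0 : Fin 2) ++ List.replicate y (1 : Fin 2)) →
    P.flatten = List.replicate z (1 : Fin 2) ++ w →
    (w = [] ∨ ∃ w', w = (0 : Fin 2) :: w') →
    ∃ Q : List (List (Fin 2)),
      (∀ p ∈ Q, ∃ x y, x ≤ j ∧ y ≤ k ∧
        p = List.replicate x (0 : Fin 2) ++ List.replicate y (1 : Fin 2)) ∧
      Q.flatten = w ∧
      Q.length + (if z = 0 then 0 else if z ≤ k then 1 else 2) ≤ P.length := by
  intro P
  induction P with
  | nil =>
    intro z w _ hfl hw
    simp only [List.flatten_nil] at hfl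
    rcases List.append_eq_nil_iff.mp hfl.symm with ⟨h1, h2⟩
    have hz : z = 0 := by simpa using congrArg List.length h1
    exact ⟨[], by simp, by simp [h2], by simp [hz]⟩
  | cons p P' ih =>
    intro z w hAdm hfl hw
    by_cases hz : z = 0
    · subst hz
      simp only [List.replicate_zero, List.nil_append] at hfl
      exact ⟨p :: P', hAdm, hfl, by simp⟩
    · have hz' : 0 < z := Nat.pos_of_ne_zero hz
      obtain ⟨x, y, hxj, hyk, rfl⟩ := hAdm p List.mem_cons_self
      have hAdm' : ∀ p ∈ P', ∃ x y, x ≤ j ∧ y ≤ k ∧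
          p = List.replicate x (0 : Fin 2) ++ List.replicate y (1 : Fin 2) :=
        fun q hq => hAdm q (by simp [hq])
      rw [List.flatten_cons, List.append_assoc] at hfl
      have hx0 : x = 0 := by
        by_contra hx
        exact rep_rep_clash (Nat.pos_of_ne_zero hx) hz' (by decide) hfl
      subst hx0
      simp only [List.replicate_zero, List.nil_append] at hfl
      have hyz : y ≤ z := by
        by_contra hyz
        have hfl' := rep_split z y 1 _ _ hfl.symm (by omega)
        rcases hw with rfl | ⟨w', rfl⟩
        · rcases List.append_eq_nil_iff.mp hfl'.symm with ⟨h1, _⟩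
          have : y - z = 0 := by simpa using congrArg List.length h1
          omega
        · exact rep_rep_clash (by omega) (by omega) (by decide)
            (hfl'.symm.trans (by simp [List.replicate_succ]) :
              List.replicate (y - z) (1 : Fin 2) ++ _
                = List.replicate 1 (0 : Fin 2) ++ w')
      have hfl' := rep_split y z 1 _ _ hfl hyz
      obtain ⟨Q, hQ, hQfl, hQlen⟩ := ih (z - y) w hAdm' hfl' hw
      refine ⟨Q, hQ, hQfl, ?_⟩
      simp only [List.length_cons]
      split_ifs at hQlen ⊢ <;> omega

/-- Main counting lower bound: any admissible split of `cword n s` into pieces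
`a^x b^y` with `x ≤ j`, `y ≤ 3n - j` has at least `cost` pieces. -/
private lemma cost_le {n j : ℕ} (hn : 0 < n) (hj : j ≤ 2 * n) :
    ∀ (s : List ℕ) (P : List (List (Fin 2))),
    (∀ q ∈ s, n ≤ q ∧ q ≤ 2 * n) →
    (∀ p ∈ P, ∃ x y, x ≤ j ∧ y ≤ 3 * n - j ∧
        p = List.replicate x (0 : Fin 2) ++ List.replicate y (1 : Fin 2)) →
    P.flatten = cword n s →
    (s.map (fun q => if q = j then 1 else 2)).sum ≤ P.length := by
  intro s
  induction s with
  | nil => intro P _ _ _; simp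
  | cons q s' ih =>
    intro P hs hAdm hfl
    obtain ⟨hq1, hq2⟩ := hs q (by simp)
    have hfl' : P.flatten = List.replicate q (0 : Fin 2) ++
        (List.replicate (3 * n - q) (1 : Fin 2) ++ cword n s') := by
      rw [hfl]; simp [cword, cw, List.append_assoc]
    obtain ⟨Q1, hQ1a, hQ1fl, hQ1len⟩ := peelA P q _ hAdm hfl' (by
      right
      refine ⟨List.replicate (3 * n - q - 1) (1 : Fin 2) ++ cword n s', ?_⟩
      rw [show 3 * n - q = (3 * n - q - 1) + 1 by omega]
      simp [List.replicate_succ])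
    obtain ⟨Q2, hQ2a, hQ2fl, hQ2len⟩ := peelB Q1 (3 * n - q) _ hQ1a hQ1fl (by
      cases s' with
      | nil => left; simp [cword]
      | cons q' t =>
        right
        have hq' := (hs q' (by simp)).1
        refine ⟨List.replicate (q' - 1) (0 : Fin 2) ++
          (List.replicate (3 * n - q') (1 : Fin 2) ++ cword n t), ?_⟩
        simp only [cword, List.map_cons, List.flatten_cons, cw]
        rw [show q' = (q' - 1) + 1 by omega]
        simp [List.replicate_succ, List.append_assoc])
    have hrec := ih Q2 (fun r hr => hs r (by simp [hr])) hQ2a hQ2fl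
    simp only [List.map_cons, List.sum_cons]
    split_ifs at hQ1len hQ2len ⊢ <;> omega

/-- `c(q)` embeds into `c(i)c(i)`. -/
private lemma cw_sub_sq {n q i : ℕ} (hq1 : n ≤ q) (hq2 : q ≤ 2 * n)
    (hi1 : n ≤ i) (hi2 : i ≤ 2 * n) :
    (cw n q).Sublist (cw n i ++ cw n i) := by
  unfold cw
  rcases Nat.le_total q i with h | h
  · have e : List.replicate (3 * n - q) (1 : Fin 2)
        = List.replicate (3 * n - i) (1 : Fin 2) ++ List.replicate (i - q) (1 : Fin 2) := by
      rw [← List.replicate_add]; congr 1; omega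
    rw [e, ← List.append_assoc]
    refine List.Sublist.append (List.Sublist.append ?_ (List.Sublist.refl _)) ?_
    · exact (List.replicate_sublist_replicate _).mpr h
    · exact ((List.replicate_sublist_replicate _).mpr (by omega : i - q ≤ 3 * n - i)).trans
        (List.sublist_append_right _ _)
  · have e : List.replicate q (0 : Fin 2)
        = List.replicate i (0 : Fin 2) ++ List.replicate (q - i) (0 : Fin 2) := by
      rw [← List.replicate_add]; congr 1; omega
    rw [e, List.append_assoc]
    have target : (List.replicate i (0 : Fin 2) ++ List.replicate (3 * n - i) (1 : Fin 2)) ++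
        (List.replicate i (0 : Fin 2) ++ List.replicate (3 * n - i) (1 : Fin 2))
        = List.replicate i (0 : Fin 2) ++ ((List.replicate (3 * n - i) (1 : Fin 2) ++
          List.replicate i (0 : Fin 2)) ++ List.replicate (3 * n - i) (1 : Fin 2)) := by
      simp [List.append_assoc]
    rw [target]
    refine List.Sublist.append (List.Sublist.refl _) (List.Sublist.append ?_ ?_)
    · exact ((List.replicate_sublist_replicate _).mpr (by omega : q - i ≤ i)).trans
        (List.sublist_append_right _ _)
    · exact (List.replicate_sublist_replicate _).mpr (by omega)

private lemma cword_sub {n i : ℕ} (hi1 : n ≤ i) (hi2 : i ≤ 2 * n) :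
    ∀ s : List ℕ, (∀ q ∈ s, n ≤ q ∧ q ≤ 2 * n) →
    (cword n s).Sublist
      (List.replicate ((s.map (fun q => if q = i then 1 else 2)).sum) (cw n i)).flatten := by
  intro s
  induction s with
  | nil => intro _; simp [cword]
  | cons q s' ih =>
    intro hs
    obtain ⟨hq1, hq2⟩ := hs q (by simp)
    have step : cword n (q :: s') = cw n q ++ cword n s' := by simp [cword]
    rw [step]
    simp only [List.map_cons, List.sum_cons]
    rw [List.replicate_add, List.flatten_append]
    refine List.Sublist.append ?_ (ih fun r hr => hs r (by simp [hr]))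
    by_cases h : q = i
    · subst h; simp
    · have : (List.replicate (if q = i then 1 else 2) (cw n i)).flatten
          = cw n i ++ cw n i := by simp [h, List.replicate_succ]
      rw [this]
      exact cw_sub_sq hq1 hq2 hi1 hi2

private lemma rep_flat_mono {α : Type} (u : List α) {m m' : ℕ} (h : m ≤ m') :
    (List.replicate m u).flatten.Sublist (List.replicate m' u).flatten := by
  rw [show m' = m + (m' - m) by omega, List.replicate_add, List.flatten_append]
  exact List.sublist_append_left _ _

private lemma cost_count (i : ℕ) : ∀ s : List ℕ,
    (s.map (fun q => if q = i then 1 else 2)).sum + s.count i = 2 * s.length := by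
  intro s
  induction s with
  | nil => simp
  | cons q s' ih =>
    simp only [List.map_cons, List.sum_cons, List.count_cons, List.length_cons]
    by_cases h : q = i <;> simp [h] <;> omega

/-- For even `n > 0` and distinct subsets `X ≠ Y` of `H` of size `n/2`, there is a
word `v` with `w_X v ∈ ↓L_n` and `w_Y v ∉ ↓L_n`, where `w_X = c(p_1 ⋯ p_{n/2})`
lists the elements of `X` in increasing order. -/
theorem downClosure_separating_word (n : ℕ) (hpos : 0 < n) (heven : Even n)
    (X Y : Finset ℕ) (hX : X ⊆ Finset.Icc n (2 * n)) (hY : Y ⊆ Finset.Icc n (2 * n))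
    (hXcard : X.card = n / 2) (hYcard : Y.card = n / 2) (hne : X ≠ Y) :
    ∃ v : List (Fin 2),
      cword n (X.sort (· ≤ ·)) ++ v ∈ downClosure (Lwit n) ∧
      cword n (Y.sort (· ≤ ·)) ++ v ∉ downClosure (Lwit n) := by
  have hmod : n % 2 = 0 := Nat.even_iff.mp heven
  obtain ⟨i, hiX, hiY⟩ : ∃ i, i ∈ X ∧ i ∉ Y := by
    by_contra h
    push_neg at h
    exact hne (Finset.eq_of_subset_of_card_le h (by omega))
  have hi := Finset.mem_Icc.mp (hX hiX)
  refine ⟨cw n i, ?_, ?_⟩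
  · -- membership part
    have key : cword n (X.sort (· ≤ ·)) ++ cw n i = cword n (X.sort (· ≤ ·) ++ [i]) := by
      simp [cword]
    rw [key]
    have hall : ∀ q ∈ X.sort (· ≤ ·) ++ [i], n ≤ q ∧ q ≤ 2 * n := by
      intro q hq
      rcases List.mem_append.mp hq with hq | hq
      · exact Finset.mem_Icc.mp (hX ((Finset.mem_sort _).mp hq))
      · simp at hq; subst hq; exact hi
    have hsub := cword_sub hi.1 hi.2 (X.sort (· ≤ ·) ++ [i]) hall
    have hc := cost_count i (X.sort (· ≤ ·) ++ [i])
    have hcnt : (X.sort (· ≤ ·) ++ [i]).count i = 2 := by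
      rw [List.count_append]
      have h1 : (X.sort (· ≤ ·)).count i = 1 :=
        List.count_eq_one_of_mem (Finset.sort_nodup _ _) ((Finset.mem_sort _).mpr hiX)
      simp [h1]
    have hlen : (X.sort (· ≤ ·) ++ [i]).length = n / 2 + 1 := by
      simp [Finset.length_sort, hXcard]
    have hcost : ((X.sort (· ≤ ·) ++ [i]).map (fun q => if q = i then 1 else 2)).sum ≤ n := by
      omega
    exact ⟨(List.replicate n (cw n i)).flatten, ⟨i, Finset.mem_Icc.mpr hi, rfl⟩,
      hsub.trans (rep_flat_mono _ hcost)⟩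
  · -- non-membership part
    rintro ⟨y, ⟨j, hj, rfl⟩, hsub⟩
    have hjI := Finset.mem_Icc.mp hj
    have key : cword n (Y.sort (· ≤ ·)) ++ cw n i = cword n (Y.sort (· ≤ ·) ++ [i]) := by
      simp [cword]
    rw [key] at hsub
    obtain ⟨P, hPlen, hPfl, hPsub⟩ := split_rep (cw n j) n _ hsub
    have hAdm : ∀ p ∈ P, ∃ x y, x ≤ j ∧ y ≤ 3 * n - j ∧
        p = List.replicate x (0 : Fin 2) ++ List.replicate y (1 : Fin 2) := by
      intro p hp
      have := hPsub p hp
      rw [cw] at this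
      exact piece_form this
    have hall : ∀ q ∈ Y.sort (· ≤ ·) ++ [i], n ≤ q ∧ q ≤ 2 * n := by
      intro q hq
      rcases List.mem_append.mp hq with hq | hq
      · exact Finset.mem_Icc.mp (hY ((Finset.mem_sort _).mp hq))
      · simp at hq; subst hq; exact hi
    have hle := cost_le hpos hjI.2 (Y.sort (· ≤ ·) ++ [i]) P hall hAdm hPfl
    have hc := cost_count j (Y.sort (· ≤ ·) ++ [i])
    have hcnt : (Y.sort (· ≤ ·) ++ [i]).count j ≤ 1 := by
      rw [List.count_append]
      have h2 : (Y.sort (· ≤ ·)).count j ≤ 1 := by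
        by_cases hjY : j ∈ Y.sort (· ≤ ·)
        · exact le_of_eq (List.count_eq_one_of_mem (Finset.sort_nodup _ _) hjY)
        · simp [List.count_eq_zero_of_not_mem hjY]
      by_cases hji : j = i
      · subst hji
        have h3 : (Y.sort (· ≤ ·)).count j = 0 :=
          List.count_eq_zero_of_not_mem (fun hm => hiY ((Finset.mem_sort _).mp hm))
        simp [h3]
      · have h4 : List.count j [i] = 0 := by
          simp [List.count_singleton]
          omega
        omega
    have hlen : (Y.sort (· ≤ ·) ++ [i]).length = n / 2 + 1 := by
      simp [Finset.length_sort, hYcard]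
    omega
end

section
/- Let σ ∈ H* and i ∈ H. The longest prefix of the infinite word c(i)^ω that is a subword of d(σ) is c(i)^{η_i(σ)}; that is, c(i)^{η_i(σ)} ⊑ d(σ) while c(i)^{η_i(σ)}·a is not a subword of d(σ). -/
section AuxSub

open List

lemma repCancel {α : Type*} {c : α} : ∀ {x y : ℕ} {u v : List α},
    u.head? ≠ some c → v.head? ≠ some c →
    List.replicate x c ++ u = List.replicate y c ++ v → x = y ∧ u = v := by
  intro x
  induction x with
  | zero =>
    intro y u v hu hv h
    cases y with
    | zero => simpa using h
    | succ y =>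
      exfalso; apply hu
      rw [List.replicate_zero, List.nil_append, List.replicate_succ, List.cons_append] at h
      rw [h]; rfl
  | succ x ih =>
    intro y u v hu hv h
    cases y with
    | zero =>
      exfalso; apply hv
      rw [List.replicate_zero, List.nil_append, List.replicate_succ, List.cons_append] at h
      rw [← h]; rfl
    | succ y =>
      rw [List.replicate_succ, List.replicate_succ, List.cons_append, List.cons_append] at h
      injection h with _ h
      obtain ⟨h1, h2⟩ := ih hu hv h
      exact ⟨by omega, h2⟩

lemma head?_rep_app {α : Type*} {c : α} {k : ℕ} (hk : 1 ≤ k) (l : List α) :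
    (List.replicate k c ++ l).head? = some c := by
  obtain ⟨k', rfl⟩ : ∃ k', k = k' + 1 := ⟨k - 1, by omega⟩
  simp [List.replicate_succ]

lemma notsub {n i p : ℕ} (hn : 1 ≤ n) (hi1 : n ≤ i) (hi2 : i ≤ 2*n)
    (hp1 : n ≤ p) (hp2 : p ≤ 2*n) (hne : i ≠ p) :
    ¬ (cw n i ++ [(0 : Fin 2)]).Sublist (cw n p ++ cw n p) := by
  intro h
  rw [List.sublist_append_iff] at h
  obtain ⟨l₁, l₂, heq, h₁, h₂⟩ := h
  rw [cw, List.sublist_append_iff] at h₁ h₂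
  obtain ⟨a₁, b₁, rfl, ha₁, hb₁⟩ := h₁
  obtain ⟨a₂, b₂, rfl, ha₂, hb₂⟩ := h₂
  rw [List.sublist_replicate_iff] at ha₁ hb₁ ha₂ hb₂
  obtain ⟨m₁, hm₁, rfl⟩ := ha₁
  obtain ⟨m₂, hm₂, rfl⟩ := hb₁
  obtain ⟨m₃, hm₃, rfl⟩ := ha₂
  obtain ⟨m₄, hm₄, rfl⟩ := hb₂
  rw [cw] at heq
  simp only [List.append_assoc] at heq
  have h31 : (1 : Fin 2) ≠ 0 := by decide
  have h30 : (0 : Fin 2) ≠ 1 := by decide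
  have hhead1 : (List.replicate (3*n - i) (1 : Fin 2) ++ [(0 : Fin 2)]).head? ≠ some 0 := by
    rw [head?_rep_app (by omega)]; simpa using h31
  rcases Nat.eq_zero_or_pos m₂ with rfl | hm2pos
  · rw [List.replicate_zero, List.nil_append,
      show (List.replicate m₁ (0:Fin 2) ++ (List.replicate m₃ 0 ++ List.replicate m₄ 1))
        = List.replicate (m₁+m₃) 0 ++ List.replicate m₄ 1 from by
          rw [List.replicate_add, List.append_assoc]] at heq
    have hv : (List.replicate m₄ (1 : Fin 2)).head? ≠ some 0 := by
      cases m₄ with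
      | zero => simp
      | succ q => rw [List.replicate_succ]; simpa using h31
    obtain ⟨_, h2⟩ := repCancel hhead1 hv heq
    have : (0 : Fin 2) ∈ List.replicate m₄ (1 : Fin 2) := by
      rw [← h2]; exact List.mem_append_right _ (List.mem_singleton_self _)
    exact h30 (List.eq_of_mem_replicate this)
  · have hv : (List.replicate m₂ (1:Fin 2) ++ (List.replicate m₃ (0:Fin 2)
        ++ List.replicate m₄ (1:Fin 2))).head? ≠ some 0 := by
      rw [head?_rep_app hm2pos]; simpa using h31
    obtain ⟨him, h2⟩ := repCancel hhead1 hv heq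
    rcases Nat.eq_zero_or_pos m₃ with rfl | hm3pos
    · rw [List.replicate_zero, List.nil_append, ← List.replicate_add] at h2
      have : (0 : Fin 2) ∈ List.replicate (m₂ + m₄) (1 : Fin 2) := by
        rw [← h2]; exact List.mem_append_right _ (List.mem_singleton_self _)
      exact h30 (List.eq_of_mem_replicate this)
    · have hu0 : ([(0:Fin 2)]).head? ≠ some 1 := by simpa using h30
      have hv0 : (List.replicate m₃ (0:Fin 2) ++ List.replicate m₄ (1:Fin 2)).head? ≠ some 1 := by
        rw [head?_rep_app hm3pos]; simpa using h30
      obtain ⟨him2, _⟩ := repCancel hu0 hv0 h2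
      omega

end AuxSub

section MainSub

lemma csub {n i p : ℕ} (hn : 1 ≤ n) (hi1 : n ≤ i) (hi2 : i ≤ 2*n)
    (hp1 : n ≤ p) (hp2 : p ≤ 2*n) :
    (cw n i).Sublist (cw n p ++ cw n p) := by
  rw [cw, cw]
  have ht : (List.replicate p (0:Fin 2) ++ List.replicate (3*n-p) 1) ++
      (List.replicate p (0:Fin 2) ++ List.replicate (3*n-p) 1)
      = List.replicate p (0:Fin 2) ++ (List.replicate (3*n-p) (1:Fin 2) ++
        (List.replicate p (0:Fin 2) ++ List.replicate (3*n-p) 1)) := by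
    simp [List.append_assoc]
  rw [ht]
  rcases le_total i p with h | h
  · have e : 3*n - i = (3*n - p) + (p - i) := by omega
    rw [e, List.replicate_add]
    refine List.Sublist.append ((List.replicate_sublist_replicate _).mpr h) ?_
    refine List.Sublist.append (List.Sublist.refl _) ?_
    exact (((List.replicate_sublist_replicate _).mpr (by omega)).trans
      (List.sublist_append_right _ _))
  · have e : List.replicate i (0:Fin 2) = List.replicate p 0 ++ List.replicate (i-p) 0 := by
      rw [← List.replicate_add]; congr 1; omega
    rw [e, List.append_assoc]
    refine List.Sublist.append (List.Sublist.refl _) ?_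
    rw [show List.replicate (3*n-p) (1:Fin 2) ++ (List.replicate p (0:Fin 2)
        ++ List.replicate (3*n-p) 1) = (List.replicate (3*n-p) (1:Fin 2)
        ++ List.replicate p 0) ++ List.replicate (3*n-p) 1 from by
      rw [List.append_assoc]]
    refine List.Sublist.append ?_ ((List.replicate_sublist_replicate _).mpr (by omega))
    exact (((List.replicate_sublist_replicate _).mpr (by omega)).trans
      (List.sublist_append_right _ _))

lemma dword_cons (n p : ℕ) (s : List ℕ) :
    dword n (p :: s) = (cw n p ++ cw n p) ++ dword n s := by
  simp [dword]

lemma pos_part (n : ℕ) (hn : 1 ≤ n) (i : ℕ) (hi1 : n ≤ i) (hi2 : i ≤ 2*n) :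
    ∀ s : List ℕ, (∀ p ∈ s, p ∈ Finset.Icc n (2*n)) →
    ((List.replicate (s.length + s.count i) (cw n i)).flatten).Sublist (dword n s) := by
  intro s
  induction s with
  | nil => intro _; simp [dword]
  | cons p s' ih =>
    intro hmem
    have hp := Finset.mem_Icc.mp (hmem p List.mem_cons_self)
    have hs' : ∀ q ∈ s', q ∈ Finset.Icc n (2*n) := fun q hq => hmem q (List.mem_cons_of_mem _ hq)
    rw [dword_cons]
    rcases eq_or_ne p i with rfl | hne
    · have e : (p :: s').length + (p :: s').count p
          = (s'.length + s'.count p) + 1 + 1 := by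
        rw [List.count_cons_self, List.length_cons]; omega
      rw [e, List.replicate_succ, List.replicate_succ, List.flatten_cons, List.flatten_cons,
        List.append_assoc]
      exact List.Sublist.append (List.Sublist.refl _)
        (List.Sublist.append (List.Sublist.refl _) (ih hs'))
    · have e : (p :: s').length + (p :: s').count i = (s'.length + s'.count i) + 1 := by
        rw [List.count_cons_of_ne hne, List.length_cons]; omega
      rw [e, List.replicate_succ, List.flatten_cons]
      exact List.Sublist.append (csub hn hi1 hi2 hp.1 hp.2) (ih hs')

lemma length_cw {n i : ℕ} (hi : i ≤ 3*n) : (cw n i).length = 3*n := by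
  simp [cw]; omega

lemma length_flat_rep (n i : ℕ) (hi : i ≤ 3*n) (q : ℕ) :
    ((List.replicate q (cw n i)).flatten).length = q * (3*n) := by
  simp [List.length_flatten, List.map_replicate, List.sum_replicate, smul_eq_mul,
    length_cw hi]

lemma reduce (n i : ℕ) (hn : 1 ≤ n) (hi1 : n ≤ i) (hi2 : i ≤ 2*n) (k m' : ℕ)
    (w y : List (Fin 2))
    (hsub : ((List.replicate (m' + k) (cw n i)).flatten ++ [(0:Fin 2)]).Sublist (w ++ y))
    (hbound : ∀ u : List (Fin 2),
      u <+: ((List.replicate (m' + k) (cw n i)).flatten ++ [(0:Fin 2)]) →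
      u.Sublist w → u.length ≤ k * (3*n)) :
    ((List.replicate m' (cw n i)).flatten ++ [(0:Fin 2)]).Sublist y := by
  have hi3 : i ≤ 3*n := by omega
  rw [List.sublist_append_iff] at hsub
  obtain ⟨u, v, hx, hu, hv⟩ := hsub
  have hul : u.length ≤ k * (3*n) := hbound u ⟨v, hx.symm⟩ hu
  have hsuf_t : ((List.replicate m' (cw n i)).flatten ++ [(0:Fin 2)])
      <:+ ((List.replicate (m' + k) (cw n i)).flatten ++ [(0:Fin 2)]) := by
    refine ⟨(List.replicate k (cw n i)).flatten, ?_⟩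
    rw [← List.append_assoc, ← List.flatten_append, ← List.replicate_add, Nat.add_comm k m']
  have hsuf_v : v <:+ ((List.replicate (m' + k) (cw n i)).flatten ++ [(0:Fin 2)]) := by
    rw [hx]; exact List.suffix_append u v
  have hprod : (m' + k) * (3*n) = m' * (3*n) + k * (3*n) := by ring
  have hxlen : ((List.replicate (m' + k) (cw n i)).flatten ++ [(0:Fin 2)]).length
      = (m' + k) * (3*n) + 1 := by
    rw [List.length_append, length_flat_rep n i hi3]; rfl
  have htlen : ((List.replicate m' (cw n i)).flatten ++ [(0:Fin 2)]).length
      = m' * (3*n) + 1 := by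
    rw [List.length_append, length_flat_rep n i hi3]; rfl
  have hvlen : ((List.replicate (m' + k) (cw n i)).flatten ++ [(0:Fin 2)]).length
      = u.length + v.length := by rw [hx, List.length_append]
  exact ((List.suffix_of_suffix_length_le hsuf_t hsuf_v (by omega)).sublist).trans hv

lemma haux (n i : ℕ) (hn : 1 ≤ n) (hi1 : n ≤ i) (q : ℕ) :
    [(0:Fin 2)] <+: ((List.replicate q (cw n i)).flatten ++ [(0:Fin 2)]) := by
  cases q with
  | zero => simp
  | succ q =>
    rw [List.replicate_succ, List.flatten_cons]
    have hcw : cw n i = (0:Fin 2) :: (List.replicate (i-1) 0 ++ List.replicate (3*n-i) 1) := by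
      obtain ⟨i', rfl⟩ : ∃ i', i = i' + 1 := ⟨i - 1, by omega⟩
      rw [cw, List.replicate_succ]; simp
    rw [hcw]
    exact ⟨_, rfl⟩

lemma neg_part (n : ℕ) (hn : 1 ≤ n) (i : ℕ) (hi1 : n ≤ i) (hi2 : i ≤ 2*n) :
    ∀ s : List ℕ, (∀ p ∈ s, p ∈ Finset.Icc n (2*n)) →
    ¬ ((List.replicate (s.length + s.count i) (cw n i)).flatten
        ++ [(0 : Fin 2)]).Sublist (dword n s) := by
  intro s
  have hi3 : i ≤ 3*n := by omega
  induction s with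
  | nil => intro _ h; simp [dword] at h
  | cons p s' ih =>
    intro hmem hsub
    have hp := Finset.mem_Icc.mp (hmem p List.mem_cons_self)
    have hs' : ∀ q ∈ s', q ∈ Finset.Icc n (2*n) := fun q hq => hmem q (List.mem_cons_of_mem _ hq)
    rw [dword_cons] at hsub
    rcases eq_or_ne p i with rfl | hne
    · have e : (p :: s').length + (p :: s').count p
          = (s'.length + s'.count p) + 2 := by
        rw [List.count_cons_self, List.length_cons]; omega
      rw [e] at hsub
      refine ih hs' (reduce n p hn hi1 hi2 2 _ _ _ hsub ?_)
      intro u _ husub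
      have h1 := husub.length_le
      rw [List.length_append, length_cw hi3] at h1
      omega
    · have e : (p :: s').length + (p :: s').count i
          = (s'.length + s'.count i) + 1 := by
        rw [List.count_cons_of_ne hne, List.length_cons]; omega
      rw [e] at hsub
      refine ih hs' (reduce n i hn hi1 hi2 1 _ _ _ hsub ?_)
      intro u hupre husub
      by_contra hgt
      push_neg at hgt
      have hpre0 : (cw n i ++ [(0:Fin 2)])
          <+: ((List.replicate (s'.length + s'.count i + 1) (cw n i)).flatten
            ++ [(0:Fin 2)]) := by
        rw [List.replicate_succ, List.flatten_cons, List.append_assoc]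
        obtain ⟨t, ht⟩ := haux n i hn hi1 (s'.length + s'.count i)
        exact ⟨t, by rw [List.append_assoc, ht]⟩
      have hple : (cw n i ++ [(0:Fin 2)]).length ≤ u.length := by
        rw [List.length_append, length_cw hi3]
        simpa using by omega
      have ht0 := List.prefix_of_prefix_length_le hpre0 hupre hple
      exact notsub hn hi1 hi2 hp.1 hp.2 (Ne.symm hne) (ht0.sublist.trans husub)

end MainSub


/-- For `σ ∈ H*` and `i ∈ H`, the longest prefix of `c(i)^ω` that is a subword of
`d(σ)` is `c(i)^(η_i(σ))`, where `η_i(σ) = |σ| + (number of occurrences of i in σ)`: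
`c(i)^(η_i(σ))` embeds in `d(σ)` while `c(i)^(η_i(σ))·a` does not. -/
theorem prefix_of_power_in_dword (n : ℕ) (hn : 1 ≤ n)
    (i : ℕ) (hi : i ∈ Finset.Icc n (2 * n))
    (s : List ℕ) (hs : ∀ p ∈ s, p ∈ Finset.Icc n (2 * n)) :
    ((List.replicate (s.length + s.count i) (cw n i)).flatten).Sublist (dword n s) ∧
    ¬ ((List.replicate (s.length + s.count i) (cw n i)).flatten
        ++ [(0 : Fin 2)]).Sublist (dword n s) := by
  obtain ⟨hi1, hi2⟩ := Finset.mem_Icc.mp hi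
  exact ⟨pos_part n hn i hi1 hi2 s hs, neg_part n hn i hi1 hi2 s hs⟩
end

section
/- Upper bound on the state complexity of interiors: let L ⊆ Σ* be a regular language recognized by an NFA with n states. Then both the upward interior ↑int L and the downward interior ↓int L are recognized by DFAs with strictly fewer than ψ(n) states, where ψ(n) is the n-th Dedekind number; i.e., nD(↑int L) < ψ(n) and nD(↓int L) < ψ(n). -/
/-- The `n`-th Dedekind number: the number of antichains in the lattice of subsets
of an `n`-element set. -/
noncomputable def dedekind (n : ℕ) : ℕ :=
  Set.ncard {A : Finset (Finset (Fin n)) | IsAntichain (· ⊆ ·) (A : Set (Finset (Fin n)))}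

noncomputable section AuxInterior

open scoped Classical
set_option linter.unusedSectionVars false

namespace AuxInterior

variable {α σ : Type} [Fintype α] [Fintype σ]

/-! ### Minimal elements of a family of finsets -/

/-- The minimal elements of a family of finsets. -/
def minA (𝒮 : Finset (Finset σ)) : Finset (Finset σ) :=
  𝒮.filter fun S => ∀ T ∈ 𝒮, T ⊆ S → T = S

theorem mem_minA {𝒮 : Finset (Finset σ)} {S : Finset σ} :
    S ∈ minA 𝒮 ↔ S ∈ 𝒮 ∧ ∀ T ∈ 𝒮, T ⊆ S → T = S := Finset.mem_filter

theorem minA_subset (𝒮 : Finset (Finset σ)) : minA 𝒮 ⊆ 𝒮 := Finset.filter_subset _ _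

theorem minA_antichain (𝒮 : Finset (Finset σ)) :
    IsAntichain (· ⊆ ·) (minA 𝒮 : Set (Finset σ)) := by
  intro S hS T hT hne hsub
  rw [Finset.mem_coe, mem_minA] at hS hT
  exact hne (hT.2 S (hS.1) hsub)

theorem exists_minA_le {𝒮 : Finset (Finset σ)} {S : Finset σ} (hS : S ∈ 𝒮) :
    ∃ T ∈ minA 𝒮, T ⊆ S := by
  obtain ⟨a, ha, hmin⟩ := Set.Finite.exists_minimalFor id {T | T ∈ 𝒮 ∧ T ⊆ S}
    (Set.toFinite _) ⟨S, hS, subset_rfl⟩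
  refine ⟨a, mem_minA.2 ⟨ha.1, fun T hT hTa => ?_⟩, ha.2⟩
  exact subset_antisymm hTa (hmin ⟨hT, hTa.trans ha.2⟩ hTa)

theorem minA_nonempty {𝒮 : Finset (Finset σ)} (h : 𝒮.Nonempty) : (minA 𝒮).Nonempty := by
  obtain ⟨S, hS⟩ := h
  obtain ⟨T, hT, -⟩ := exists_minA_le hS
  exact ⟨T, hT⟩

theorem minA_congr {𝒯 𝒮 : Finset (Finset σ)} (hsub : 𝒯 ⊆ 𝒮)
    (hdom : ∀ S ∈ 𝒮, ∃ T ∈ 𝒯, T ⊆ S) : minA 𝒯 = minA 𝒮 := by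
  ext S
  simp only [mem_minA]
  constructor
  · rintro ⟨hS𝒯, hmin⟩
    refine ⟨hsub hS𝒯, fun T hT hTS => ?_⟩
    obtain ⟨T', hT', hT'T⟩ := hdom T hT
    have hT'S : T' = S := hmin T' hT' (hT'T.trans hTS)
    exact subset_antisymm hTS (hT'S ▸ hT'T)
  · rintro ⟨hS𝒮, hmin⟩
    obtain ⟨T, hT, hTS⟩ := hdom S hS𝒮
    have hTSe : T = S := hmin T (hsub hT) hTS
    exact ⟨hTSe ▸ hT, fun T' hT' h => hmin T' (hsub hT') h⟩

/-! ### Finset version of the transition structure of an NFA -/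

variable (M : NFA α σ)

/-- One-step successors, as a finset. -/
def post (S : Finset σ) (a : α) : Finset σ := (M.stepSet (↑S) a).toFinset

@[simp] theorem coe_post (S : Finset σ) (a : α) : (post M S a : Set σ) = M.stepSet (↑S) a :=
  Set.coe_toFinset _

theorem post_mono {S T : Finset σ} (h : S ⊆ T) (a : α) : post M S a ⊆ post M T a := by
  intro q hq
  have := (Set.mem_toFinset).1 hq
  rw [NFA.mem_stepSet] at this
  obtain ⟨t, ht, h2⟩ := this
  exact (Set.mem_toFinset).2 (NFA.mem_stepSet.2 ⟨t, h (Finset.mem_coe.1 ht), h2⟩)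

/-- Multi-step successors, as a finset. -/
def postW (S : Finset σ) (w : List α) : Finset σ := w.foldl (post M) S

@[simp] theorem postW_nil (S : Finset σ) : postW M S [] = S := rfl

@[simp] theorem postW_cons (S : Finset σ) (a : α) (w : List α) :
    postW M S (a :: w) = postW M (post M S a) w := rfl

@[simp] theorem postW_append (S : Finset σ) (u v : List α) :
    postW M S (u ++ v) = postW M (postW M S u) v := List.foldl_append ..

theorem coe_postW (S : Finset σ) (w : List α) :
    (postW M S w : Set σ) = M.evalFrom (↑S) w := by
  induction w generalizing S with
  | nil => rfl
  | cons a w ih =>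
    rw [postW_cons, ih]
    show M.evalFrom _ w = List.foldl M.stepSet _ (a :: w)
    rw [List.foldl_cons, coe_post]
    rfl

theorem postW_mono {S T : Finset σ} (h : S ⊆ T) (w : List α) : postW M S w ⊆ postW M T w := by
  induction w generalizing S T with
  | nil => simpa
  | cons a w ih => simpa using ih (post_mono M h a)

/-- All finsets reachable from members of a family by reading any word. -/
def reach (𝒮 : Finset (Finset σ)) : Finset (Finset σ) :=
  {T | ∃ S ∈ 𝒮, ∃ w : List α, T = postW M S w}.toFinset

theorem mem_reach {𝒮 : Finset (Finset σ)} {T : Finset σ} :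
    T ∈ reach M 𝒮 ↔ ∃ S ∈ 𝒮, ∃ w : List α, T = postW M S w := Set.mem_toFinset

theorem subset_reach (𝒮 : Finset (Finset σ)) : 𝒮 ⊆ reach M 𝒮 := fun S hS =>
  (mem_reach (M := M)).2 ⟨S, hS, [], rfl⟩

theorem reach_mono {𝒮 𝒯 : Finset (Finset σ)} (h : 𝒮 ⊆ 𝒯) : reach M 𝒮 ⊆ reach M 𝒯 := by
  intro T hT
  obtain ⟨S, hS, w, rfl⟩ := (mem_reach (M := M)).1 hT
  exact (mem_reach (M := M)).2 ⟨S, h hS, w, rfl⟩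

/-- The initial state set of `M`, as a finset. -/
def I0 : Finset σ := M.start.toFinset

@[simp] theorem coe_I0 : (I0 M : Set σ) = M.start := Set.coe_toFinset _

/-- Acceptance predicate for a family: every member of the family meets `M.accept`. -/
def AcceptPred (A : Finset (Finset σ)) : Prop := ∀ S ∈ A, ∃ q ∈ S, q ∈ M.accept

theorem acceptPred_minA_iff {𝒮 : Finset (Finset σ)} :
    AcceptPred M (minA 𝒮) ↔ AcceptPred M 𝒮 := by
  constructor
  · intro h S hS
    obtain ⟨T, hT, hTS⟩ := exists_minA_le hS
    obtain ⟨q, hq, hq'⟩ := h T hT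
    exact ⟨q, hTS hq, hq'⟩
  · intro h S hS
    exact h S (minA_subset _ hS)

theorem mem_accepts_iff (y : List α) :
    y ∈ M.accepts ↔ ∃ q ∈ postW M (I0 M) y, q ∈ M.accept := by
  rw [NFA.mem_accepts]
  constructor
  · rintro ⟨q, hq, hq'⟩
    refine ⟨q, ?_, hq⟩
    have : (postW M (I0 M) y : Set σ) = M.evalFrom M.start y := by rw [coe_postW, coe_I0]
    rw [← Finset.mem_coe, this]; exact hq'
  · rintro ⟨q, hq, hq'⟩
    refine ⟨q, hq', ?_⟩
    have : (postW M (I0 M) y : Set σ) = M.evalFrom M.start y := by rw [coe_postW, coe_I0]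
    rw [← this]; exact hq

/-! ### Determinism helper -/

theorem evalFrom_det {q : Type} (D : NFA α q) (δ : q → α → q)
    (hstep : ∀ s a, D.step s a = {δ s a}) (q0 : q) (x : List α) :
    D.evalFrom {q0} x = {x.foldl δ q0} := by
  induction x using List.reverseRecOn with
  | nil => simp
  | append_singleton xs a ih =>
    rw [NFA.evalFrom_append, NFA.evalFrom_singleton, ih, List.foldl_append]
    simp [NFA.stepSet, hstep]

/-! ### The state type: nonempty antichains of finsets of states -/

/-- Nonempty antichains of subsets of `σ`: the states of our DFAs. -/
@[reducible] def QT (σ : Type) [Fintype σ] : Type :=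
  {A : Finset (Finset σ) // IsAntichain (· ⊆ ·) (A : Set (Finset σ)) ∧ A.Nonempty}

noncomputable instance : Fintype (QT σ) := by unfold QT; infer_instance

theorem isAntichain_map (e : Finset σ ≃ Finset (Fin (Fintype.card σ)))
    (hmono : ∀ B C : Finset σ, B ⊆ C ↔ e B ⊆ e C) (A : Finset (Finset σ)) :
    IsAntichain (· ⊆ ·) (A : Set (Finset σ)) ↔
      IsAntichain (· ⊆ ·) ((A.map e.toEmbedding : Finset (Finset (Fin (Fintype.card σ)))) :
        Set (Finset (Fin (Fintype.card σ)))) := by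
  constructor
  · rintro h B hB C hC hne hsub
    rw [Finset.mem_coe, Finset.mem_map] at hB hC
    obtain ⟨b, hb, rfl⟩ := hB
    obtain ⟨c, hc, rfl⟩ := hC
    exact h hb hc (fun hbc => hne (by rw [hbc])) ((hmono b c).2 hsub)
  · rintro h B hB C hC hne hsub
    refine h (Finset.mem_coe.2 (Finset.mem_map_of_mem _ hB))
      (Finset.mem_coe.2 (Finset.mem_map_of_mem _ hC))
      (fun hbc => hne (e.injective hbc)) ((hmono B C).1 hsub)

theorem card_QT_lt (n : ℕ) (hcard : Fintype.card σ = n) :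
    Fintype.card (QT σ) < dedekind n := by
  subst hcard
  have e : σ ≃ Fin (Fintype.card σ) := Fintype.equivFin σ
  have hmono : ∀ B C : Finset σ, B ⊆ C ↔ e.finsetCongr B ⊆ e.finsetCongr C := by
    intro B C
    rw [Equiv.finsetCongr_apply, Equiv.finsetCongr_apply, Finset.map_subset_map]
  have key := isAntichain_map e.finsetCongr hmono
  have E2 : {A : Finset (Finset σ) // IsAntichain (· ⊆ ·) (A : Set (Finset σ))} ≃
      {B : Finset (Finset (Fin (Fintype.card σ))) //
        IsAntichain (· ⊆ ·) (B : Set (Finset (Fin (Fintype.card σ))))} :=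
    Equiv.subtypeEquiv ((e.finsetCongr).finsetCongr)
      (fun A => by rw [Equiv.finsetCongr_apply]; exact key A)
  have hded : dedekind (Fintype.card σ) =
      Fintype.card {A : Finset (Finset σ) // IsAntichain (· ⊆ ·) (A : Set (Finset σ))} := by
    rw [dedekind, ← Nat.card_coe_set_eq, Nat.card_eq_fintype_card]
    exact Fintype.card_congr ((Equiv.subtypeEquivRight (fun _ => Iff.rfl)).trans E2.symm)
  rw [hded]
  have hanti : IsAntichain (· ⊆ ·) (((∅ : Finset (Finset σ)) : Set (Finset σ))) := by
    intro a ha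
    simp at ha
  refine Fintype.card_lt_of_injective_of_notMem
    (fun A : QT σ => (⟨A.1, A.2.1⟩ : {A : Finset (Finset σ) //
      IsAntichain (· ⊆ ·) (A : Set (Finset σ))})) ?_ (b := ⟨∅, hanti⟩) ?_
  · intro A B h
    have h1 := congrArg Subtype.val h
    exact Subtype.ext h1
  · intro hmem
    obtain ⟨A, hA⟩ := hmem
    have : A.1 = ∅ := congrArg Subtype.val hA
    exact A.2.2.ne_empty this

/-! ### The DFA for the upward interior -/

/-- Start state for the upward-interior DFA. -/
def upStart : QT σ :=
  ⟨minA (reach M {I0 M}), minA_antichain _,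
    minA_nonempty ⟨I0 M, subset_reach M _ (Finset.mem_singleton_self _)⟩⟩

/-- Transition of the upward-interior DFA. -/
def upStep (A : QT σ) (a : α) : QT σ :=
  ⟨minA (reach M ((A.1).image fun S => post M S a)), minA_antichain _,
    minA_nonempty (((A.2.2).image _).mono (subset_reach M _))⟩

/-- The upward-interior DFA. -/
def upDFA : NFA α (QT σ) where
  step A a := {upStep M A a}
  start := {upStart M}
  accept := {A | AcceptPred M A.1}

/-- The family of all state sets reachable along superwords of `x`. -/
def Fup (x : List α) : Finset (Finset σ) :=
  {T | ∃ y : List α, x.Sublist y ∧ T = postW M (I0 M) y}.toFinset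

theorem mem_Fup {x : List α} {T : Finset σ} :
    T ∈ Fup M x ↔ ∃ y : List α, x.Sublist y ∧ T = postW M (I0 M) y := Set.mem_toFinset

theorem Fup_nil : Fup M [] = reach M {I0 M} := by
  ext T
  rw [mem_Fup, mem_reach]
  constructor
  · rintro ⟨y, -, rfl⟩; exact ⟨I0 M, Finset.mem_singleton_self _, y, rfl⟩
  · rintro ⟨S, hS, w, rfl⟩
    rw [Finset.mem_singleton] at hS
    exact ⟨w, List.nil_sublist _, by rw [hS]⟩

theorem Fup_append (x : List α) (a : α) :
    Fup M (x ++ [a]) = reach M ((Fup M x).image fun S => post M S a) := by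
  ext T
  rw [mem_Fup, mem_reach]
  constructor
  · rintro ⟨z, hz, rfl⟩
    obtain ⟨r₁, r₂, rfl, h1, h2⟩ := List.append_sublist_iff.1 hz
    obtain ⟨s, t, rfl⟩ := List.append_of_mem (List.singleton_sublist.1 h2)
    refine ⟨post M (postW M (I0 M) (r₁ ++ s)) a, ?_, t, ?_⟩
    · exact Finset.mem_image_of_mem _ ((mem_Fup (M := M)).2
        ⟨r₁ ++ s, h1.trans (List.sublist_append_left _ _), rfl⟩)
    · rw [show r₁ ++ (s ++ a :: t) = (r₁ ++ s) ++ (a :: t) by simp, postW_append, postW_cons]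
  · rintro ⟨S', hS', v, rfl⟩
    rw [Finset.mem_image] at hS'
    obtain ⟨S, hS, rfl⟩ := hS'
    obtain ⟨y, hy, rfl⟩ := (mem_Fup (M := M)).1 hS
    refine ⟨y ++ a :: v, ?_, by rw [postW_append, postW_cons]⟩
    exact List.Sublist.append hy (List.singleton_sublist.2 (List.mem_cons_self (a := a) (l := v)))

theorem upRun (x : List α) :
    (x.foldl (upStep M) (upStart M)).1 = minA (Fup M x) := by
  induction x using List.reverseRecOn with
  | nil =>
    show (upStart M).1 = _
    rw [upStart, Fup_nil]
  | append_singleton xs a ih =>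
    rw [List.foldl_append, List.foldl_cons, List.foldl_nil, Fup_append]
    show minA (reach M (((xs.foldl (upStep M) (upStart M)).1).image fun S => post M S a)) = _
    rw [ih]
    refine minA_congr (reach_mono M (Finset.image_subset_image (minA_subset _))) ?_
    intro S' hS'
    obtain ⟨S'', hS'', w, rfl⟩ := (mem_reach (M := M)).1 hS'
    rw [Finset.mem_image] at hS''
    obtain ⟨S, hS, rfl⟩ := hS''
    obtain ⟨T, hT, hTS⟩ := exists_minA_le hS
    refine ⟨postW M (post M T a) w, ?_, postW_mono M (post_mono M hTS a) w⟩
    exact (mem_reach (M := M)).2 ⟨post M T a, Finset.mem_image_of_mem _ hT, w, rfl⟩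

theorem up_accepts : (upDFA M).accepts = upInterior M.accepts := by
  ext x
  have hdet : ∀ (s : QT σ) (a : α), (upDFA M).step s a = {upStep M s a} := fun _ _ => rfl
  rw [NFA.mem_accepts]
  show (∃ A ∈ (upDFA M).accept, A ∈ (upDFA M).evalFrom {upStart M} x) ↔ _
  rw [evalFrom_det _ (upStep M) hdet (upStart M) x]
  constructor
  · rintro ⟨A, hA, hA'⟩
    rw [Set.mem_singleton_iff] at hA'
    subst hA'
    intro y hy
    have haccept : AcceptPred M (minA (Fup M x)) := by
      rw [← upRun M x]; exact hA
    rw [acceptPred_minA_iff] at haccept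
    obtain ⟨q, hq, hq'⟩ := haccept (postW M (I0 M) y) ((mem_Fup (M := M)).2 ⟨y, hy, rfl⟩)
    exact (mem_accepts_iff M y).2 ⟨q, hq, hq'⟩
  · intro h
    refine ⟨x.foldl (upStep M) (upStart M), ?_, rfl⟩
    show AcceptPred M (x.foldl (upStep M) (upStart M)).1
    rw [upRun M x, acceptPred_minA_iff]
    intro S hS
    obtain ⟨y, hy, rfl⟩ := (mem_Fup (M := M)).1 hS
    exact (mem_accepts_iff M y).1 (h y hy)

/-! ### The DFA for the downward interior -/

/-- Start state for the downward-interior DFA. -/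
def downStart : QT σ :=
  ⟨minA {I0 M}, minA_antichain _, minA_nonempty ⟨I0 M, Finset.mem_singleton_self _⟩⟩

/-- Transition of the downward-interior DFA. -/
def downStep (A : QT σ) (a : α) : QT σ :=
  ⟨minA (A.1 ∪ (A.1).image fun S => post M S a), minA_antichain _,
    minA_nonempty ((A.2.2).mono Finset.subset_union_left)⟩

/-- The downward-interior DFA. -/
def downDFA : NFA α (QT σ) where
  step A a := {downStep M A a}
  start := {downStart M}
  accept := {A | AcceptPred M A.1}

/-- The family of all state sets reachable along subwords of `x`. -/
def Gdown (x : List α) : Finset (Finset σ) :=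
  {T | ∃ y : List α, y.Sublist x ∧ T = postW M (I0 M) y}.toFinset

theorem mem_Gdown {x : List α} {T : Finset σ} :
    T ∈ Gdown M x ↔ ∃ y : List α, y.Sublist x ∧ T = postW M (I0 M) y := Set.mem_toFinset

theorem Gdown_nil : Gdown M [] = {I0 M} := by
  ext T
  rw [mem_Gdown, Finset.mem_singleton]
  constructor
  · rintro ⟨y, hy, rfl⟩
    rw [List.sublist_nil] at hy
    rw [hy, postW_nil]
  · rintro rfl
    exact ⟨[], List.Sublist.refl _, rfl⟩

theorem Gdown_append (x : List α) (a : α) :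
    Gdown M (x ++ [a]) = Gdown M x ∪ (Gdown M x).image fun S => post M S a := by
  ext T
  rw [mem_Gdown, Finset.mem_union, Finset.mem_image]
  constructor
  · rintro ⟨y, hy, rfl⟩
    obtain ⟨l₁, l₂, rfl, h1, h2⟩ := List.sublist_append_iff.1 hy
    rcases List.sublist_singleton.1 h2 with rfl | rfl
    · exact Or.inl ((mem_Gdown (M := M)).2 ⟨l₁, by simpa using h1, by rw [List.append_nil]⟩)
    · refine Or.inr ⟨postW M (I0 M) l₁, (mem_Gdown (M := M)).2 ⟨l₁, h1, rfl⟩, ?_⟩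
      rw [postW_append]; rfl
  · rintro (hT | ⟨S, hS, rfl⟩)
    · obtain ⟨y, hy, rfl⟩ := (mem_Gdown (M := M)).1 hT
      exact ⟨y, hy.trans (List.sublist_append_left _ _), rfl⟩
    · obtain ⟨y, hy, rfl⟩ := (mem_Gdown (M := M)).1 hS
      refine ⟨y ++ [a], List.Sublist.append hy (List.Sublist.refl _), ?_⟩
      rw [postW_append]; rfl

theorem downRun (x : List α) :
    (x.foldl (downStep M) (downStart M)).1 = minA (Gdown M x) := by
  induction x using List.reverseRecOn with
  | nil =>
    show (downStart M).1 = _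
    rw [downStart, Gdown_nil]
  | append_singleton xs a ih =>
    rw [List.foldl_append, List.foldl_cons, List.foldl_nil, Gdown_append]
    show minA ((xs.foldl (downStep M) (downStart M)).1 ∪
      ((xs.foldl (downStep M) (downStart M)).1).image fun S => post M S a) = _
    rw [ih]
    refine minA_congr (Finset.union_subset_union (minA_subset _)
      (Finset.image_subset_image (minA_subset _))) ?_
    intro S' hS'
    rw [Finset.mem_union, Finset.mem_image] at hS'
    rcases hS' with hS' | ⟨S, hS, rfl⟩
    · obtain ⟨T, hT, hTS⟩ := exists_minA_le hS'
      exact ⟨T, Finset.mem_union_left _ hT, hTS⟩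
    · obtain ⟨T, hT, hTS⟩ := exists_minA_le hS
      exact ⟨post M T a, Finset.mem_union_right _ (Finset.mem_image_of_mem _ hT),
        post_mono M hTS a⟩

theorem down_accepts : (downDFA M).accepts = downInterior M.accepts := by
  ext x
  have hdet : ∀ (s : QT σ) (a : α), (downDFA M).step s a = {downStep M s a} := fun _ _ => rfl
  rw [NFA.mem_accepts]
  show (∃ A ∈ (downDFA M).accept, A ∈ (downDFA M).evalFrom {downStart M} x) ↔ _
  rw [evalFrom_det _ (downStep M) hdet (downStart M) x]
  constructor
  · rintro ⟨A, hA, hA'⟩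
    rw [Set.mem_singleton_iff] at hA'
    subst hA'
    intro y hy
    have haccept : AcceptPred M (minA (Gdown M x)) := by
      rw [← downRun M x]; exact hA
    rw [acceptPred_minA_iff] at haccept
    obtain ⟨q, hq, hq'⟩ := haccept (postW M (I0 M) y) ((mem_Gdown (M := M)).2 ⟨y, hy, rfl⟩)
    exact (mem_accepts_iff M y).2 ⟨q, hq, hq'⟩
  · intro h
    refine ⟨x.foldl (downStep M) (downStart M), ?_, rfl⟩
    show AcceptPred M (x.foldl (downStep M) (downStart M)).1
    rw [downRun M x, acceptPred_minA_iff]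
    intro S hS
    obtain ⟨y, hy, rfl⟩ := (mem_Gdown (M := M)).1 hS
    exact (mem_accepts_iff M y).1 (h y hy)

theorem upDFA_det : (upDFA M).Deterministic :=
  ⟨⟨upStart M, rfl⟩, fun _ _ => Set.subsingleton_singleton⟩

theorem downDFA_det : (downDFA M).Deterministic :=
  ⟨⟨downStart M, rfl⟩, fun _ _ => Set.subsingleton_singleton⟩

end AuxInterior

end AuxInterior

/-- Upper bound on the state complexity of interiors: if `L` is recognized by an
NFA with `n` states, then both interiors are recognized by DFAs with strictly fewer
than `ψ(n)` states, `ψ` being the Dedekind number function. -/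
theorem nD_interiors_lt_dedekind {α σ : Type} [Fintype α] [Fintype σ]
    (M : NFA α σ) (n : ℕ) (hcard : Fintype.card σ = n) :
    nD (upInterior M.accepts) < dedekind n ∧
    nD (downInterior M.accepts) < dedekind n := by
  classical
  have hlt := AuxInterior.card_QT_lt (σ := σ) n hcard
  constructor
  · refine lt_of_le_of_lt (Nat.sInf_le ?_) hlt
    exact ⟨AuxInterior.QT σ, inferInstance, AuxInterior.upDFA M,
      AuxInterior.upDFA_det M, rfl, AuxInterior.up_accepts M⟩
  · refine lt_of_le_of_lt (Nat.sInf_le ?_) hlt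
    exact ⟨AuxInterior.QT σ, inferInstance, AuxInterior.downDFA M,
      AuxInterior.downDFA_det M, rfl, AuxInterior.down_accepts M⟩
end

section
/- Doubly-exponential lower bound for downward interiors of NFAs: for every n ≥ 3, let ℓ = ⌊(n−3)/2⌋, let Σ be an alphabet with 2^ℓ letters, and let L_n = Σ* \ {a a | a ∈ Σ} (all words over Σ except the two-letter words consisting of a repeated letter). Then nN(L_n) ≤ n, while the downward interior ↓int L_n equals the language V_Σ of words with pairwise distinct letters and nN(↓int L_n) = 2^{2^ℓ} = 2^{2^{⌊(n−3)/2⌋}}. -/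
namespace AuxDE

open NFA

variable {α σ : Type*}

lemma stepSet_singleton (M : NFA α σ) (q : σ) (a : α) : M.stepSet {q} a = M.step q a := by
  simp [NFA.stepSet]

lemma evalFrom_cons (M : NFA α σ) (S : Set σ) (a : α) (t : List α) :
    M.evalFrom S (a :: t) = M.evalFrom (M.stepSet S a) t := rfl

lemma evalFrom_append (M : NFA α σ) (S : Set σ) (x y : List α) :
    M.evalFrom S (x ++ y) = M.evalFrom (M.evalFrom S x) y := by
  simp [NFA.evalFrom, List.foldl_append]

lemma stepSet_mono (M : NFA α σ) {S T : Set σ} (h : S ⊆ T) (a : α) :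
    M.stepSet S a ⊆ M.stepSet T a := by
  intro x hx
  rw [NFA.mem_stepSet] at hx ⊢
  obtain ⟨t, ht, hs⟩ := hx
  exact ⟨t, h ht, hs⟩

lemma evalFrom_mono (M : NFA α σ) {S T : Set σ} (h : S ⊆ T) (w : List α) :
    M.evalFrom S w ⊆ M.evalFrom T w := by
  induction w generalizing S T with
  | nil => exact h
  | cons a t ih => exact ih (stepSet_mono M h a)

lemma evalFrom_empty (M : NFA α σ) (w : List α) : M.evalFrom ∅ w = ∅ := by
  induction w with
  | nil => rfl
  | cons a t ih => rw [evalFrom_cons, NFA.stepSet_empty, ih]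

lemma evalFrom_biUnion (M : NFA α σ) (w : List α) (S : Set σ) :
    M.evalFrom S w = ⋃ q ∈ S, M.evalFrom {q} w := by
  induction w generalizing S with
  | nil => simp
  | cons a t ih =>
    rw [evalFrom_cons, ih]
    ext x
    simp only [Set.mem_iUnion]
    constructor
    · rintro ⟨q, hq, hx⟩
      rw [NFA.mem_stepSet] at hq
      obtain ⟨p, hp, hq⟩ := hq
      refine ⟨p, hp, ?_⟩
      rw [evalFrom_cons, stepSet_singleton, ih]
      exact Set.mem_iUnion₂.2 ⟨q, hq, hx⟩
    · rintro ⟨p, hp, hx⟩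
      rw [evalFrom_cons, stepSet_singleton, ih] at hx
      obtain ⟨q, hq, hx⟩ := Set.mem_iUnion₂.1 hx
      exact ⟨q, NFA.mem_stepSet .. |>.2 ⟨p, hp, hq⟩, hx⟩

end AuxDE

namespace AuxDE

/-- States of the small NFA for `Σ* \ {aa}`. -/
abbrev St (ℓ : ℕ) : Type := Option Bool ⊕ (Fin ℓ × Bool)

/-- `A`: initial state (accepting, accepts ε). -/
abbrev stA (ℓ : ℕ) : St ℓ := Sum.inl none
/-- `P`: accepting state reached after 1 letter, after 2 distinct letters, or length ≥ 3. -/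
abbrev stP (ℓ : ℕ) : St ℓ := Sum.inl (some true)
/-- `R`: non-accepting state. -/
abbrev stR (ℓ : ℕ) : St ℓ := Sum.inl (some false)

/-- Small NFA recognizing all words except `[a, a]`. -/
def M1 (ℓ : ℕ) : NFA (Fin (2 ^ ℓ)) (St ℓ) where
  step q a :=
    match q with
    | Sum.inl none =>
        {stP ℓ} ∪ Set.range (fun i : Fin ℓ => Sum.inr (i, a.val.testBit i.val))
    | Sum.inl (some true) => {stR ℓ}
    | Sum.inl (some false) => {stR ℓ, stP ℓ}
    | Sum.inr (i, b) => if a.val.testBit i.val ≠ b then {stP ℓ} else ∅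
  start := {stA ℓ}
  accept := {stA ℓ, stP ℓ}

lemma bits_differ {ℓ : ℕ} {a b : Fin (2 ^ ℓ)} (h : a ≠ b) :
    ∃ i : Fin ℓ, a.val.testBit i.val ≠ b.val.testBit i.val := by
  by_contra hc
  push_neg at hc
  apply h
  apply Fin.ext
  apply Nat.eq_of_testBit_eq
  intro i
  by_cases hi : i < ℓ
  · exact hc ⟨i, hi⟩
  · have ha : a.val < 2 ^ i :=
      lt_of_lt_of_le a.isLt (Nat.pow_le_pow_right (by norm_num) (le_of_not_gt hi))
    have hb : b.val < 2 ^ i :=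
      lt_of_lt_of_le b.isLt (Nat.pow_le_pow_right (by norm_num) (le_of_not_gt hi))
    rw [Nat.testBit_eq_false_of_lt ha, Nat.testBit_eq_false_of_lt hb]

lemma M1_eval_one {ℓ : ℕ} (a : Fin (2 ^ ℓ)) :
    (M1 ℓ).eval [a] = {stP ℓ} ∪ Set.range (fun i : Fin ℓ => Sum.inr (i, a.val.testBit i.val)) := by
  rw [NFA.eval_singleton]
  show (M1 ℓ).stepSet {stA ℓ} a = _
  rw [stepSet_singleton]
  rfl

lemma M1_P_mem_one {ℓ : ℕ} (a : Fin (2 ^ ℓ)) : stP ℓ ∈ (M1 ℓ).eval [a] := by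
  rw [M1_eval_one]; exact Or.inl rfl

lemma M1_R_mem {ℓ : ℕ} (w : List (Fin (2 ^ ℓ))) (hw : 2 ≤ w.length) :
    stR ℓ ∈ (M1 ℓ).eval w := by
  induction w using List.reverseRecOn with
  | nil => simp at hw
  | append_singleton u c ih =>
    rw [NFA.eval_append_singleton, NFA.mem_stepSet]
    by_cases hu : 2 ≤ u.length
    · exact ⟨stR ℓ, ih hu, Or.inl rfl⟩
    · have hlen : u.length = 1 := by
        simp only [List.length_append, List.length_singleton] at hw
        omega
      obtain ⟨a, rfl⟩ : ∃ a, u = [a] := by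
        rcases u with _ | ⟨a, _ | _⟩ <;> simp_all
      exact ⟨stP ℓ, M1_P_mem_one a, rfl⟩

lemma M1_P_mem_ge3 {ℓ : ℕ} (w : List (Fin (2 ^ ℓ))) (hw : 3 ≤ w.length) :
    stP ℓ ∈ (M1 ℓ).eval w := by
  induction w using List.reverseRecOn with
  | nil => simp at hw
  | append_singleton u c _ =>
    rw [NFA.eval_append_singleton, NFA.mem_stepSet]
    have hu : 2 ≤ u.length := by
      simp only [List.length_append, List.length_singleton] at hw; omega
    exact ⟨stR ℓ, M1_R_mem u hu, Or.inr rfl⟩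

lemma M1_P_mem_two {ℓ : ℕ} {a b : Fin (2 ^ ℓ)} (h : a ≠ b) :
    stP ℓ ∈ (M1 ℓ).eval [a, b] := by
  obtain ⟨i, hi⟩ := bits_differ h
  have : ([a, b] : List (Fin (2 ^ ℓ))) = [a] ++ [b] := rfl
  rw [this, NFA.eval_append_singleton, NFA.mem_stepSet]
  refine ⟨Sum.inr (i, a.val.testBit i.val), ?_, ?_⟩
  · rw [M1_eval_one]; exact Or.inr ⟨i, rfl⟩
  · show stP ℓ ∈ if b.val.testBit i.val ≠ a.val.testBit i.val then {stP ℓ} else (∅ : Set (St ℓ))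
    rw [if_pos (Ne.symm hi)]
    rfl

lemma M1_reject {ℓ : ℕ} (a : Fin (2 ^ ℓ)) (q : St ℓ) (hq : q ∈ (M1 ℓ).eval [a, a]) :
    q = stR ℓ := by
  have : ([a, a] : List (Fin (2 ^ ℓ))) = [a] ++ [a] := rfl
  rw [this, NFA.eval_append_singleton, NFA.mem_stepSet] at hq
  obtain ⟨t, ht, hq⟩ := hq
  rw [M1_eval_one] at ht
  rcases ht with ht | ⟨i, rfl⟩
  · rw [ht] at hq
    exact hq
  · have : (M1 ℓ).step (Sum.inr (i, a.val.testBit i.val)) a = ∅ := by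
      show (if a.val.testBit i.val ≠ a.val.testBit i.val then {stP ℓ} else (∅ : Set (St ℓ))) = ∅
      simp
    rw [this] at hq
    exact absurd hq (Set.notMem_empty q)

lemma M1_accepts (ℓ : ℕ) :
    (M1 ℓ).accepts = {w : List (Fin (2 ^ ℓ)) | ¬ ∃ a : Fin (2 ^ ℓ), w = [a, a]} := by
  ext w
  constructor
  · rintro ⟨S, hS, hev⟩ ⟨a, rfl⟩
    have := M1_reject a S hev
    rcases hS with hS | hS <;> rw [this] at hS <;> simp [stR, stA, stP] at hS
  · intro hw
    rcases w with _ | ⟨a, _ | ⟨b, _ | ⟨c, t⟩⟩⟩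
    · exact ⟨stA ℓ, Or.inl rfl, rfl⟩
    · exact ⟨stP ℓ, Or.inr rfl, M1_P_mem_one a⟩
    · by_cases hab : a = b
      · exact absurd ⟨a, by rw [hab]⟩ hw
      · exact ⟨stP ℓ, Or.inr rfl, M1_P_mem_two hab⟩
    · exact ⟨stP ℓ, Or.inr rfl, M1_P_mem_ge3 _ (by simp only [List.length_cons]; omega)⟩

end AuxDE

namespace AuxDE

/-- The minimal DFA for the language of words with pairwise distinct letters:
states are the sets of letters seen so far. -/
def M2 (ℓ : ℕ) : NFA (Fin (2 ^ ℓ)) (Finset (Fin (2 ^ ℓ))) where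
  step s a := if a ∈ s then ∅ else {insert a s}
  start := {∅}
  accept := Set.univ

lemma M2_evalFrom {ℓ : ℕ} (w : List (Fin (2 ^ ℓ))) :
    ∀ s : Finset (Fin (2 ^ ℓ)),
      (M2 ℓ).evalFrom {s} w =
        if w.Nodup ∧ ∀ a ∈ w, a ∉ s then {s ∪ w.toFinset} else ∅ := by
  induction w with
  | nil => intro s; simp
  | cons a t ih =>
    intro s
    rw [evalFrom_cons, stepSet_singleton]
    show (M2 ℓ).evalFrom (if a ∈ s then ∅ else {insert a s}) t = _
    by_cases has : a ∈ s
    · rw [if_pos has, evalFrom_empty, eq_comm, if_neg]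
      rintro ⟨-, hall⟩
      exact hall a List.mem_cons_self has
    · rw [if_neg has, ih]
      have hiff : (t.Nodup ∧ ∀ b ∈ t, b ∉ insert a s) ↔
          ((a :: t).Nodup ∧ ∀ b ∈ a :: t, b ∉ s) := by
        simp only [List.nodup_cons, List.mem_cons, Finset.mem_insert]
        constructor
        · rintro ⟨hnd, hall⟩
          refine ⟨⟨fun hat => (hall a hat) (Or.inl rfl), hnd⟩, ?_⟩
          rintro b (rfl | hbt)
          · exact has
          · exact fun hbs => (hall b hbt) (Or.inr hbs)
        · rintro ⟨⟨hat, hnd⟩, hall⟩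
          refine ⟨hnd, fun b hbt => ?_⟩
          rintro (rfl | hbs)
          · exact hat hbt
          · exact (hall b (Or.inr hbt)) hbs
      have hset : insert a s ∪ t.toFinset = s ∪ (a :: t).toFinset := by
        rw [List.toFinset_cons, Finset.insert_union, Finset.union_insert]
      rw [hset]
      by_cases hc : (a :: t).Nodup ∧ ∀ b ∈ a :: t, b ∉ s
      · rw [if_pos (hiff.mpr hc), if_pos hc]
      · rw [if_neg (fun h => hc (hiff.mp h)), if_neg hc]

lemma M2_accepts (ℓ : ℕ) :
    (M2 ℓ).accepts = {x : List (Fin (2 ^ ℓ)) | x.Nodup} := by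
  ext w
  have hev : (M2 ℓ).eval w =
      if w.Nodup ∧ ∀ a ∈ w, a ∉ (∅ : Finset (Fin (2 ^ ℓ))) then {(∅ : Finset (Fin (2 ^ ℓ))) ∪ w.toFinset} else ∅ := by
    show (M2 ℓ).evalFrom {(∅ : Finset (Fin (2 ^ ℓ)))} w = _
    exact M2_evalFrom w ∅
  constructor
  · rintro ⟨S, -, hS⟩
    rw [hev] at hS
    by_cases hc : w.Nodup ∧ ∀ a ∈ w, a ∉ (∅ : Finset (Fin (2 ^ ℓ)))
    · exact hc.1
    · rw [if_neg hc] at hS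
      exact absurd hS (Set.notMem_empty S)
  · intro hw
    refine ⟨(∅ : Finset (Fin (2 ^ ℓ))) ∪ w.toFinset, Set.mem_univ _, ?_⟩
    rw [hev, if_pos ⟨hw, fun a _ => Finset.notMem_empty a⟩]
    rfl

lemma M2_lower {ℓ : ℕ} {σ : Type} [Fintype σ] (M : NFA (Fin (2 ^ ℓ)) σ)
    (hacc : M.accepts = {x : List (Fin (2 ^ ℓ)) | x.Nodup}) :
    2 ^ 2 ^ ℓ ≤ Fintype.card σ := by
  have key : ∀ S : Finset (Fin (2 ^ ℓ)), ∃ q, q ∈ M.eval S.toList ∧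
      ∃ f ∈ M.accept, f ∈ M.evalFrom {q} Sᶜ.toList := by
    intro S
    have hmem : (S.toList ++ Sᶜ.toList) ∈ M.accepts := by
      rw [hacc]
      refine List.Nodup.append S.nodup_toList Sᶜ.nodup_toList ?_
      intro a ha hb
      rw [Finset.mem_toList] at ha hb
      exact (Finset.mem_compl.mp hb) ha
    obtain ⟨f, hf, hfev⟩ := hmem
    have : f ∈ M.evalFrom (M.eval S.toList) Sᶜ.toList := by
      show f ∈ M.evalFrom (M.evalFrom M.start S.toList) Sᶜ.toList
      rw [← evalFrom_append]
      exact hfev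
    rw [evalFrom_biUnion] at this
    obtain ⟨q, hq, hfq⟩ := Set.mem_iUnion₂.1 this
    exact ⟨q, hq, f, hf, hfq⟩
  choose g hg1 hg2 using key
  have main : ∀ S T : Finset (Fin (2 ^ ℓ)), g S = g T →
      ∀ a, a ∈ S → a ∉ T → False := by
    intro S T h a haS haT
    obtain ⟨f, hf, hfev⟩ := hg2 T
    rw [← h] at hfev
    have hfe : f ∈ M.eval (S.toList ++ Tᶜ.toList) := by
      show f ∈ M.evalFrom M.start (S.toList ++ Tᶜ.toList)
      rw [evalFrom_append]
      exact evalFrom_mono M (Set.singleton_subset_iff.mpr (hg1 S)) _ hfev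
    have hmem : (S.toList ++ Tᶜ.toList) ∈ M.accepts := ⟨f, hf, hfe⟩
    rw [hacc] at hmem
    have hdisj := List.disjoint_of_nodup_append hmem
    exact hdisj (Finset.mem_toList.mpr haS)
      (Finset.mem_toList.mpr (Finset.mem_compl.mpr haT))
  have hinj : Function.Injective g := by
    intro S T h
    by_contra hne
    obtain ⟨a, ha⟩ : ∃ a, ¬(a ∈ S ↔ a ∈ T) := by
      by_contra hall
      push_neg at hall
      exact hne (Finset.ext fun a => hall a)
    by_cases haS : a ∈ S
    · have haT : a ∉ T := fun haT => ha ⟨fun _ => haT, fun _ => haS⟩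
      exact main S T h a haS haT
    · have haT : a ∈ T := by
        by_contra haT
        exact ha ⟨fun h' => absurd h' haS, fun h' => absurd h' haT⟩
      exact main T S h.symm a haT haS
  calc 2 ^ 2 ^ ℓ = Fintype.card (Finset (Fin (2 ^ ℓ))) := by
        rw [Fintype.card_finset, Fintype.card_fin]
    _ ≤ Fintype.card σ := Fintype.card_le_of_injective g hinj

end AuxDE

/-- Doubly-exponential lower bound for downward interiors: for `n ≥ 3` and
`ℓ = ⌊(n-3)/2⌋`, over an alphabet with `2^ℓ` letters, the language
`L_n = Σ* \ { aa | a ∈ Σ }` satisfies `nN(L_n) ≤ n`, its downward interior is the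
language of words with pairwise distinct letters, and `nN(↓int L_n) = 2^(2^ℓ)`. -/
theorem downInterior_doubly_exponential (n : ℕ) (hn : 3 ≤ n) (ℓ : ℕ)
    (hℓ : ℓ = (n - 3) / 2) (L : Language (Fin (2 ^ ℓ)))
    (hL : L = {w | ¬ ∃ a : Fin (2 ^ ℓ), w = [a, a]}) :
    nN L ≤ n ∧
    downInterior L = {x | x.Nodup} ∧
    nN (downInterior L) = 2 ^ 2 ^ ℓ := by
  have h2 : downInterior L = {x : List (Fin (2 ^ ℓ)) | x.Nodup} := by
    ext x
    constructor
    · intro hx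
      by_contra hnd
      obtain ⟨a, ha⟩ := List.exists_duplicate_iff_not_nodup.mpr hnd
      have hsub : List.Sublist [a, a] x := List.duplicate_iff_sublist.mp ha
      have := hx _ hsub
      rw [hL] at this
      exact this ⟨a, rfl⟩
    · intro hx y hy
      rw [hL]
      rintro ⟨a, rfl⟩
      have := hx.sublist hy
      simp at this
  refine ⟨?_, h2, ?_⟩
  · -- nN L ≤ n
    have hmem : (3 + 2 * ℓ) ∈ {m | ∃ (σ : Type) (inst : Fintype σ) (M : NFA (Fin (2 ^ ℓ)) σ),
        @Fintype.card σ inst = m ∧ M.accepts = L} := by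
      refine ⟨AuxDE.St ℓ, inferInstance, AuxDE.M1 ℓ, ?_, by rw [hL]; exact AuxDE.M1_accepts ℓ⟩
      simp [AuxDE.St]
      ring
    have h1 : nN L ≤ 3 + 2 * ℓ := Nat.sInf_le hmem
    omega
  · -- nN (downInterior L) = 2 ^ 2 ^ ℓ
    rw [h2]
    have hmem : (2 ^ 2 ^ ℓ) ∈ {m | ∃ (σ : Type) (inst : Fintype σ) (M : NFA (Fin (2 ^ ℓ)) σ),
        @Fintype.card σ inst = m ∧ M.accepts = {x : List (Fin (2 ^ ℓ)) | x.Nodup}} := by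
      refine ⟨Finset (Fin (2 ^ ℓ)), inferInstance, AuxDE.M2 ℓ, ?_, AuxDE.M2_accepts ℓ⟩
      rw [Fintype.card_finset, Fintype.card_fin]
    refine le_antisymm (Nat.sInf_le hmem) ?_
    have hinf := Nat.sInf_mem (⟨_, hmem⟩ : Set.Nonempty _)
    obtain ⟨σ, inst, M, hcard, hacc⟩ := hinf
    exact le_trans (@AuxDE.M2_lower ℓ σ inst M hacc) (le_of_eq hcard)
end

section
/- Unambiguous state complexity of the downward-closed witness: for every n > 0, over the alphabet Σ_n = {a_1,…,a_n}, let D_n = {x ∈ Σ_n^+ | for all positions i > 1, x[i] ≠ x[1]}. Then every unambiguous finite automaton recognizing the downward closure ↓D_n has at least 2^n states; in fact nU(↓D_n) = 2^n. -/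
namespace UFAAux

open Matrix
open scoped Classical

variable {α : Type*} {σ : Type*}

/-- The transition condition part of a run. -/
def Steps (M : NFA α σ) (w : List α) (r : Fin (w.length + 1) → σ) : Prop :=
  ∀ i : Fin w.length, r i.succ ∈ M.step (r i.castSucc) (w.get i)

lemma steps_cons (M : NFA α σ) (a : α) (w : List α) (r : Fin (w.length + 2) → σ) :
    Steps M (a :: w) r ↔ r 1 ∈ M.step (r 0) a ∧ Steps M w (Fin.tail r) := by
  constructor
  · intro h
    have h' : ∀ i : Fin (w.length + 1), r i.succ ∈ M.step (r i.castSucc) ((a :: w).get i) := h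
    refine ⟨by simpa using h' 0, fun i => ?_⟩
    have := h' i.succ
    simpa [Fin.tail, ← Fin.succ_castSucc] using this
  · rintro ⟨h0, h⟩
    show ∀ i : Fin (w.length + 1), r i.succ ∈ M.step (r i.castSucc) ((a :: w).get i)
    intro i
    induction i using Fin.cases with
    | zero => simpa using h0
    | succ j =>
      have := h j
      simpa [Fin.tail, ← Fin.succ_castSucc] using this

noncomputable def runCount (M : NFA α σ) (w : List α) (p q : σ) : ℕ :=
  Nat.card {r : Fin (w.length + 1) → σ // r 0 = p ∧ r (Fin.last w.length) = q ∧ Steps M w r}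

lemma runCount_nil (M : NFA α σ) (p q : σ) :
    runCount M [] p q = if p = q then 1 else 0 := by
  show Nat.card {r : Fin 1 → σ // r 0 = p ∧ r (Fin.last 0) = q ∧ Steps M [] r} = _
  split_ifs with h
  · subst h
    rw [Nat.card_eq_one_iff_exists]
    refine ⟨⟨fun _ => p, rfl, rfl, fun i => i.elim0⟩, ?_⟩
    rintro ⟨r, h0, _, _⟩
    ext i
    have : i = 0 := Subsingleton.elim _ _
    simp [this, h0]
  · have : IsEmpty {r : Fin 1 → σ // r 0 = p ∧ r (Fin.last 0) = q ∧ Steps M [] r} := by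
      constructor
      rintro ⟨r, h0, hl, _⟩
      exact h (h0 ▸ hl ▸ rfl)
    exact Nat.card_of_isEmpty

lemma natCard_sigma {ι : Type*} [Fintype ι] (f : ι → Type*) [∀ i, Finite (f i)] :
    Nat.card (Σ i, f i) = ∑ i, Nat.card (f i) := by
  letI : ∀ i, Fintype (f i) := fun i => Fintype.ofFinite _
  simp [Nat.card_eq_fintype_card]

lemma runCount_cons [Fintype σ] (M : NFA α σ) (a : α) (w : List α) (p q : σ) :
    runCount M (a :: w) p q =
      ∑ p' : σ, (if p' ∈ M.step p a then runCount M w p' q else 0) := by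
  show Nat.card {r : Fin (w.length + 2) → σ //
      r 0 = p ∧ r (Fin.last (w.length + 1)) = q ∧ Steps M (a :: w) r} = _
  rw [Nat.card_congr
    (Equiv.sigmaFiberEquiv
      (fun r : {r : Fin (w.length + 2) → σ //
          r 0 = p ∧ r (Fin.last (w.length + 1)) = q ∧ Steps M (a :: w) r} => r.1 1)).symm,
    natCard_sigma]
  refine Finset.sum_congr rfl fun p' _ => ?_
  by_cases hp' : p' ∈ M.step p a
  · rw [if_pos hp', runCount]
    refine Nat.card_congr
      { toFun := fun x => ⟨Fin.tail x.1.1, x.2, ?_, ((steps_cons M a w x.1.1).1 x.1.2.2.2).2⟩,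
        invFun := fun r' => ⟨⟨Fin.cons p r'.1, rfl, ?_, ?_⟩, ?_⟩,
        left_inv := ?_, right_inv := ?_ }
    · show x.1.1 (Fin.last w.length).succ = q
      rw [Fin.succ_last]
      exact x.1.2.2.1
    · show (Fin.cons p r'.1 : Fin (w.length+2) → σ) (Fin.last (w.length+1)) = q
      rw [← Fin.succ_last, Fin.cons_succ]
      exact r'.2.2.1
    · rw [steps_cons]
      refine ⟨?_, by rw [Fin.tail_cons]; exact r'.2.2.2⟩
      show r'.1 0 ∈ M.step ((Fin.cons p r'.1 : Fin (w.length+2) → σ) 0) a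
      rw [Fin.cons_zero, r'.2.1]
      exact hp'
    · show r'.1 0 = p'
      exact r'.2.1
    · rintro ⟨⟨r, h0, hl, hs⟩, h1⟩
      apply Subtype.ext
      apply Subtype.ext
      show (Fin.cons p (Fin.tail r) : Fin (w.length + 2) → σ) = r
      rw [← h0]
      exact Fin.cons_self_tail r
    · rintro ⟨r', h0, hl, hs⟩
      apply Subtype.ext
      show Fin.tail (Fin.cons p r' : Fin (w.length + 2) → σ) = r'
      exact Fin.tail_cons (α := fun _ => σ) p r'
  · rw [if_neg hp']
    have : IsEmpty {x : {r : Fin (w.length + 2) → σ //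
        r 0 = p ∧ r (Fin.last (w.length + 1)) = q ∧ Steps M (a :: w) r} // x.1 1 = p'} := by
      constructor
      rintro ⟨⟨r, h0, hl, hs⟩, h1⟩
      have h1' : r 1 = p' := h1
      have := ((steps_cons M a w r).1 hs).1
      rw [h0, h1'] at this
      exact hp' this
    exact Nat.card_of_isEmpty

end UFAAux

namespace UFAAux2
open UFAAux Matrix
open scoped Classical

variable {α : Type*} {σ : Type*}

noncomputable def stepMQ (M : NFA α σ) (a : α) : Matrix σ σ ℚ :=
  Matrix.of fun p q => if q ∈ M.step p a then 1 else 0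

noncomputable def TQ [Fintype σ] (M : NFA α σ) (w : List α) : Matrix σ σ ℚ :=
  (w.map (stepMQ M)).prod

lemma TQ_nil [Fintype σ] (M : NFA α σ) : TQ M [] = 1 := by simp [TQ]

lemma TQ_cons [Fintype σ] (M : NFA α σ) (a : α) (w : List α) :
    TQ M (a :: w) = stepMQ M a * TQ M w := by simp [TQ]

lemma TQ_append [Fintype σ] (M : NFA α σ) (u v : List α) :
    TQ M (u ++ v) = TQ M u * TQ M v := by
  simp [TQ, List.prod_append]

lemma TQ_apply [Fintype σ] (M : NFA α σ) (w : List α) (p q : σ) :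
    TQ M w p q = (runCount M w p q : ℚ) := by
  induction w generalizing p with
  | nil =>
    rw [TQ_nil, runCount_nil, Matrix.one_apply]
    split_ifs <;> simp
  | cons a w ih =>
    rw [TQ_cons, Matrix.mul_apply, runCount_cons]
    push_cast
    refine Finset.sum_congr rfl fun p' _ => ?_
    rw [stepMQ]
    simp only [Matrix.of_apply]
    split_ifs with h
    · rw [one_mul, ih]
    · rw [zero_mul]

noncomputable def accCount (M : NFA α σ) (w : List α) : ℕ :=
  Nat.card {r : Fin (w.length + 1) → σ // M.IsAcceptingRun w r}

lemma accCount_eq_sum [Fintype σ] (M : NFA α σ) (w : List α) :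
    accCount M w = ∑ p : σ, ∑ q : σ,
      if p ∈ M.start ∧ q ∈ M.accept then runCount M w p q else 0 := by
  rw [accCount, Nat.card_congr
    (Equiv.sigmaFiberEquiv
      (fun r : {r : Fin (w.length + 1) → σ // M.IsAcceptingRun w r} =>
        (r.1 0, r.1 (Fin.last w.length)))).symm,
    natCard_sigma, Fintype.sum_prod_type]
  refine Finset.sum_congr rfl fun p _ => Finset.sum_congr rfl fun q _ => ?_
  by_cases h : p ∈ M.start ∧ q ∈ M.accept
  · rw [if_pos h, runCount]
    refine Nat.card_congr
      { toFun := fun x => ⟨x.1.1, ?_, ?_, x.1.2.2.2⟩,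
        invFun := fun r => ⟨⟨r.1, ?_, ?_, r.2.2.2⟩, ?_⟩,
        left_inv := fun x => Subtype.ext (Subtype.ext rfl),
        right_inv := fun r => Subtype.ext rfl }
    · exact congrArg Prod.fst x.2
    · exact congrArg Prod.snd x.2
    · rw [r.2.1]; exact h.1
    · rw [r.2.2.1]; exact h.2
    · show (r.1 0, r.1 (Fin.last w.length)) = (p, q)
      rw [r.2.1, r.2.2.1]
  · rw [if_neg h]
    have : IsEmpty {x : {r : Fin (w.length + 1) → σ // M.IsAcceptingRun w r} //
        (x.1 0, x.1 (Fin.last w.length)) = (p, q)} := by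
      constructor
      rintro ⟨⟨r, hstart, haccept, hsteps⟩, hpq⟩
      have h1 : r 0 = p := congrArg Prod.fst hpq
      have h2 : r (Fin.last w.length) = q := congrArg Prod.snd hpq
      exact h ⟨h1 ▸ hstart, h2 ▸ haccept⟩
    exact Nat.card_of_isEmpty

lemma accCountQ [Fintype σ] (M : NFA α σ) (w : List α) :
    (accCount M w : ℚ) =
      (fun p => if p ∈ M.start then (1 : ℚ) else 0) ⬝ᵥ
        (TQ M w).mulVec (fun q => if q ∈ M.accept then (1 : ℚ) else 0) := by
  rw [accCount_eq_sum, dotProduct]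
  push_cast
  refine Finset.sum_congr rfl fun p _ => ?_
  rw [Matrix.mulVec, dotProduct, Finset.mul_sum]
  refine Finset.sum_congr rfl fun q _ => ?_
  rw [TQ_apply]
  split_ifs with h1 h2 h3 <;>
    first
      | (exfalso; exact h1 ⟨h2, h3⟩)
      | simp_all

lemma mem_evalFrom_iff (M : NFA α σ) (w : List α) (S : Set σ) (q : σ) :
    q ∈ M.evalFrom S w ↔ ∃ r : Fin (w.length + 1) → σ,
      r 0 ∈ S ∧ r (Fin.last w.length) = q ∧ Steps M w r := by
  induction w generalizing S with
  | nil =>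
    simp only [NFA.evalFrom_nil]
    constructor
    · intro hq
      exact ⟨fun _ => q, hq, rfl, fun i => i.elim0⟩
    · rintro ⟨r, h0, hl, _⟩
      have hl' : r 0 = q := hl
      rw [← hl']
      exact h0
  | cons a w ih =>
    show q ∈ M.evalFrom (M.stepSet S a) w ↔ _
    rw [ih]
    constructor
    · rintro ⟨r, h0, hl, hs⟩
      rw [NFA.mem_stepSet] at h0
      obtain ⟨p, hp, hstep⟩ := h0
      refine ⟨Fin.cons p r, ?_, ?_, ?_⟩
      · show (Fin.cons p r : Fin (w.length + 2) → σ) 0 ∈ S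
        rw [Fin.cons_zero]
        exact hp
      · show (Fin.cons p r : Fin (w.length + 2) → σ) (Fin.last (w.length + 1)) = q
        rw [← Fin.succ_last, Fin.cons_succ]
        exact hl
      · rw [steps_cons]
        refine ⟨?_, ?_⟩
        · show r 0 ∈ M.step ((Fin.cons p r : Fin (w.length + 2) → σ) 0) a
          rw [Fin.cons_zero]
          exact hstep
        · rw [Fin.tail_cons]
          exact hs
    · rintro ⟨r, h0, hl, hs⟩
      obtain ⟨h1, hs'⟩ := (steps_cons M a w r).1 hs
      refine ⟨Fin.tail r, ?_, ?_, hs'⟩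
      · show r 1 ∈ M.stepSet S a
        rw [NFA.mem_stepSet]
        exact ⟨r 0, h0, h1⟩
      · show r (Fin.last w.length).succ = q
        rw [Fin.succ_last]
        exact hl

lemma accepts_iff_run (M : NFA α σ) (w : List α) :
    w ∈ M.accepts ↔ ∃ r : Fin (w.length + 1) → σ, M.IsAcceptingRun w r := by
  constructor
  · rintro ⟨q, hq, hin⟩
    rw [NFA.eval, mem_evalFrom_iff] at hin
    obtain ⟨r, h0, hl, hs⟩ := hin
    exact ⟨r, h0, hl ▸ hq, hs⟩
  · rintro ⟨r, h0, hacc, hs⟩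
    refine ⟨r (Fin.last w.length), hacc, ?_⟩
    rw [NFA.eval, mem_evalFrom_iff]
    exact ⟨r, h0, rfl, hs⟩

lemma accCount_of_unambiguous (M : NFA α σ) (hU : M.Unambiguous) (w : List α) :
    accCount M w = if w ∈ M.accepts then 1 else 0 := by
  rw [accCount]
  split_ifs with h
  · obtain ⟨r, hr⟩ := (accepts_iff_run M w).1 h
    rw [Nat.card_eq_one_iff_exists]
    exact ⟨⟨r, hr⟩, fun y => Subtype.ext (hU w y.1 r y.2 hr)⟩
  · have : IsEmpty {r : Fin (w.length + 1) → σ // M.IsAcceptingRun w r} := by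
      constructor
      rintro ⟨r, hr⟩
      exact h ((accepts_iff_run M w).2 ⟨r, hr⟩)
    exact Nat.card_of_isEmpty

end UFAAux2


namespace GmatAux
open scoped Classical
open Finset

variable {n : ℕ}

noncomputable def Gmat (n : ℕ) : Matrix (Finset (Fin n)) (Finset (Fin n)) ℚ :=
  Matrix.of fun S T => if S = ∅ then 1 else if S ⊆ T then 0 else 1

noncomputable def Gmat' (n : ℕ) : Matrix (Finset (Fin n)) (Finset (Fin n)) ℚ :=
  Matrix.of fun T V => if V = ∅ then (if T = Finset.univ then 1 else 0)
    else if T ⊆ V then (-1 : ℚ) ^ (V.card - T.card + 1) else 0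

lemma neg_one_pow_sub (a b : ℕ) (h : b ≤ a) :
    ((-1 : ℚ)) ^ (a - b) = (-1) ^ a * (-1) ^ b := by
  have h2 : ((-1 : ℚ)) ^ b * (-1) ^ b = 1 := by
    rw [← pow_add, ← two_mul, pow_mul]
    norm_num
  calc ((-1 : ℚ)) ^ (a - b) = (-1) ^ (a - b) * ((-1 : ℚ) ^ b * (-1) ^ b) := by rw [h2, mul_one]
    _ = ((-1 : ℚ) ^ (a - b) * (-1) ^ b) * (-1) ^ b := by ring
    _ = (-1) ^ ((a - b) + b) * (-1) ^ b := by rw [pow_add]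
    _ = (-1) ^ a * (-1) ^ b := by rw [Nat.sub_add_cancel h]

lemma K1 (V : Finset (Fin n)) :
    ∑ T ∈ V.powerset, ((-1 : ℚ)) ^ (V.card - T.card) = if V = ∅ then 1 else 0 := by
  have step : ∀ T ∈ V.powerset, ((-1 : ℚ)) ^ (V.card - T.card)
      = (-1) ^ V.card * (-1) ^ T.card := fun T hT =>
    neg_one_pow_sub _ _ (card_le_card (mem_powerset.1 hT))
  rw [Finset.sum_congr rfl step, ← Finset.mul_sum]
  have : ∑ T ∈ V.powerset, ((-1 : ℚ)) ^ T.card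
      = (((∑ T ∈ V.powerset, ((-1 : ℤ)) ^ T.card : ℤ)) : ℚ) := by push_cast; rfl
  rw [this, Finset.sum_powerset_neg_one_pow_card]
  split_ifs with h
  · subst h; simp
  · simp

lemma K2 (S V : Finset (Fin n)) :
    ∑ T ∈ V.powerset, (if S ⊆ T then ((-1 : ℚ)) ^ (V.card - T.card) else 0)
      = if S = V then 1 else 0 := by
  by_cases hSV : S ⊆ V
  · rw [← Finset.sum_filter]
    rw [Finset.sum_nbij' (i := fun T => T \ S) (j := fun U => U ∪ S)
      (t := (V \ S).powerset) (g := fun U => ((-1 : ℚ)) ^ ((V \ S).card - U.card))]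
    · rw [K1]
      by_cases h : S = V
      · rw [if_pos h, if_pos (by simp [h])]
      · rw [if_neg h, if_neg]
        intro hVS
        exact h (subset_antisymm hSV (sdiff_eq_empty_iff_subset.1 hVS))
    · intro T hT
      simp only [mem_filter, mem_powerset] at hT
      rw [mem_powerset]
      exact sdiff_subset_sdiff hT.1 (Finset.Subset.refl S)
    · intro U hU
      rw [mem_powerset] at hU
      simp only [mem_filter, mem_powerset]
      constructor
      · exact union_subset (hU.trans (sdiff_subset)) hSV
      · exact subset_union_right
    · intro T hT
      simp only [mem_filter, mem_powerset] at hT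
      exact sdiff_union_of_subset hT.2
    · intro U hU
      rw [mem_powerset] at hU
      have hd : Disjoint U S := disjoint_of_subset_left hU sdiff_disjoint
      rw [union_sdiff_right, sdiff_eq_self_of_disjoint hd]
    · intro T hT
      simp only [mem_filter, mem_powerset] at hT
      congr 1
      have h1 : (V \ S).card = V.card - S.card := card_sdiff_of_subset hSV
      have h2 : (T \ S).card = T.card - S.card := card_sdiff_of_subset hT.2
      have h3 : S.card ≤ T.card := card_le_card hT.2
      have h4 : T.card ≤ V.card := card_le_card hT.1
      omega
  · rw [Finset.sum_eq_zero, if_neg]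
    · rintro rfl; exact hSV (Finset.Subset.refl S)
    · intro T hT
      rw [mem_powerset] at hT
      rw [if_neg (fun hST => hSV (hST.trans hT))]

lemma Gmat_mul_Gmat' (n : ℕ) : Gmat n * Gmat' n = 1 := by
  ext S V
  rw [Matrix.mul_apply, Matrix.one_apply]
  by_cases hV : V = ∅
  · subst hV
    have h' : ∀ T : Finset (Fin n), Gmat n S T * Gmat' n T ∅
        = if T = Finset.univ then Gmat n S T else 0 := by
      intro T
      have hg : Gmat' n T ∅ = if T = Finset.univ then (1:ℚ) else 0 := by
        show (if (∅ : Finset (Fin n)) = ∅ then (if T = Finset.univ then (1:ℚ) else 0)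
          else if T ⊆ ∅ then (-1 : ℚ) ^ ((∅ : Finset (Fin n)).card - T.card + 1) else 0)
          = if T = Finset.univ then (1:ℚ) else 0
        exact if_pos rfl
      rw [hg]
      split_ifs <;> simp
    rw [Finset.sum_congr rfl fun T _ => h' T, Finset.sum_ite_eq' Finset.univ,
      if_pos (Finset.mem_univ _)]
    by_cases hS : S = ∅ <;> simp [Gmat, hS, subset_univ]
  · simp only [Gmat, Gmat', Matrix.of_apply, if_neg hV]
    have key : ∀ T : Finset (Fin n),
        (if S = ∅ then (1:ℚ) else if S ⊆ T then 0 else 1) *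
          (if T ⊆ V then (-1 : ℚ) ^ (V.card - T.card + 1) else 0)
        = (if T ⊆ V then ((-1 : ℚ)) ^ (V.card - T.card + 1) else 0)
          - (if T ⊆ V then (if S ⊆ T ∧ S ≠ ∅ then ((-1 : ℚ)) ^ (V.card - T.card + 1) else 0) else 0) := by
      intro T
      by_cases h1 : T ⊆ V <;> by_cases h2 : S = ∅ <;> by_cases h3 : S ⊆ T <;>
        simp [h1, h2, h3] <;> ring
    rw [Finset.sum_congr rfl (fun T _ => key T), Finset.sum_sub_distrib]
    have huniv : Finset.univ.filter (fun T : Finset (Fin n) => T ⊆ V) = V.powerset := by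
      ext T; simp [mem_powerset]
    have e1 : ∑ T : Finset (Fin n), (if T ⊆ V then ((-1 : ℚ)) ^ (V.card - T.card + 1) else 0) = 0 := by
      rw [← Finset.sum_filter, huniv]
      have : ∀ T ∈ V.powerset, ((-1 : ℚ)) ^ (V.card - T.card + 1)
          = -1 * ((-1 : ℚ)) ^ (V.card - T.card) := by
        intro T _; rw [pow_succ]; ring
      rw [Finset.sum_congr rfl this, ← Finset.mul_sum, K1, if_neg hV, mul_zero]
    rw [e1, zero_sub]
    by_cases hS : S = ∅
    · have h0 : ∑ T : Finset (Fin n),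
          (if T ⊆ V then (if S ⊆ T ∧ S ≠ ∅ then ((-1 : ℚ)) ^ (V.card - T.card + 1) else 0) else 0)
          = 0 := by
        refine Finset.sum_eq_zero fun T _ => ?_
        have hz : (if S ⊆ T ∧ S ≠ ∅ then ((-1 : ℚ)) ^ (V.card - T.card + 1) else 0) = 0 :=
          if_neg (fun hc => hc.2 hS)
        rw [hz, ite_self]
      rw [h0, neg_zero, if_neg (by rintro rfl; exact hV hS)]
    · have hterm : ∀ T : Finset (Fin n),
          (if T ⊆ V then (if S ⊆ T ∧ S ≠ ∅ then ((-1 : ℚ)) ^ (V.card - T.card + 1) else 0) else 0)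
          = -(if T ⊆ V then (if S ⊆ T then ((-1 : ℚ)) ^ (V.card - T.card) else 0) else 0) := by
        intro T
        by_cases h1 : T ⊆ V <;> by_cases h2 : S ⊆ T <;>
          simp [h1, h2, hS, pow_succ] <;> ring
      rw [Finset.sum_congr rfl fun T _ => hterm T, Finset.sum_neg_distrib, neg_neg,
        ← Finset.sum_filter, huniv, K2]

end GmatAux


namespace UpperAux
open scoped Classical

lemma det_unambiguous {α σ : Type*} (M : NFA α σ) (h : M.Deterministic) : M.Unambiguous := by
  obtain ⟨⟨q₀, hq₀⟩, hstep⟩ := h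
  intro w r₁ r₂ h₁ h₂
  funext i
  induction i using Fin.induction with
  | zero =>
    have e₁ := h₁.1
    have e₂ := h₂.1
    rw [hq₀, Set.mem_singleton_iff] at e₁ e₂
    rw [e₁, e₂]
  | succ j ih =>
    have s₁ := h₁.2.2 j
    have s₂ := h₂.2.2 j
    rw [ih] at s₁
    exact hstep _ _ s₁ s₂

variable (n : ℕ) (hn : 0 < n)

abbrev St := Option {S : Finset (Fin n) // S ≠ Finset.univ}

def M0 : NFA (Fin n) (St n) where
  step q a :=
    match q with
    | none => {some ⟨∅, fun he => by
        have : (0 : ℕ) < (Finset.univ : Finset (Fin n)).card := by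
          rw [Finset.card_univ, Fintype.card_fin]; exact hn
        rw [← he] at this
        simp at this⟩}
    | some ⟨S, _⟩ => if h : insert a S = Finset.univ then ∅ else {some ⟨insert a S, h⟩}
  start := {none}
  accept := Set.univ

lemma M0_det : (M0 n hn).Deterministic := by
  refine ⟨⟨none, rfl⟩, ?_⟩
  rintro (_ | ⟨S, hS⟩) a
  · exact Set.subsingleton_singleton
  · show (if h : insert a S = Finset.univ then (∅ : Set (St n)) else {some ⟨insert a S, h⟩}).Subsingleton
    split_ifs
    · exact Set.subsingleton_empty
    · exact Set.subsingleton_singleton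

lemma evalFrom_empty (M : NFA (Fin n) (St n)) (t : List (Fin n)) :
    M.evalFrom ∅ t = ∅ := by
  induction t with
  | nil => rfl
  | cons a t ih =>
    show M.evalFrom (M.stepSet ∅ a) t = ∅
    rw [NFA.stepSet_empty]
    exact ih

lemma stepSet_singleton (M : NFA (Fin n) (St n)) (q : St n) (a : Fin n) :
    M.stepSet {q} a = M.step q a := by
  simp [NFA.stepSet]

lemma M0_evalFrom (t : List (Fin n)) : ∀ (S : Finset (Fin n)) (hS : S ≠ Finset.univ),
    ((M0 n hn).evalFrom {some ⟨S, hS⟩} t).Nonempty ↔ S ∪ t.toFinset ≠ Finset.univ := by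
  induction t with
  | nil =>
    intro S hS
    simp only [NFA.evalFrom_nil, List.toFinset_nil, Finset.union_empty]
    exact ⟨fun _ => hS, fun _ => ⟨some ⟨S, hS⟩, rfl⟩⟩
  | cons a t ih =>
    intro S hS
    show (((M0 n hn)).evalFrom ((M0 n hn).stepSet {some ⟨S, hS⟩} a) t).Nonempty ↔ _
    rw [stepSet_singleton]
    show ((M0 n hn).evalFrom
      (if h : insert a S = Finset.univ then ∅ else {some ⟨insert a S, h⟩}) t).Nonempty ↔ _
    have hto : S ∪ (a :: t).toFinset = insert a S ∪ t.toFinset := by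
      rw [List.toFinset_cons, Finset.union_insert, Finset.insert_union]
    split_ifs with h
    · rw [evalFrom_empty]
      constructor
      · rintro ⟨x, hx⟩
        exact absurd hx (Set.notMem_empty x)
      · intro hne
        exfalso
        apply hne
        rw [hto, h]
        simp
    · rw [ih (insert a S) h, hto]

end UpperAux


section MainAux
open UFAAux UFAAux2 GmatAux UpperAux Matrix
open scoped Classical

lemma exists_not_mem_of_short {n : ℕ} (l : List (Fin n)) (h : l.length < n) :
    ∃ b : Fin n, b ∉ l := by
  have hc : l.toFinset.card < Fintype.card (Fin n) :=
    lt_of_le_of_lt (List.toFinset_card_le l) (by simpa using h)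
  have hne : l.toFinset ≠ Finset.univ := by
    intro he
    rw [he, Finset.card_univ] at hc
    omega
  obtain ⟨b, hb⟩ : ∃ b, b ∉ l.toFinset := by
    by_contra hall
    push_neg at hall
    exact hne (Finset.eq_univ_iff_forall.2 hall)
  exact ⟨b, fun hmem => hb (List.mem_toFinset.2 hmem)⟩

lemma lower_bound (n : ℕ) (hn : 0 < n) (σ : Type) [Fintype σ] (M : NFA (Fin n) σ)
    (hU : M.Unambiguous)
    (hacc : M.accepts = {x : List (Fin n) | ∃ b : Fin n, b ∉ x.tail}) :
    2 ^ n ≤ Fintype.card σ := by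
  set c0 : Fin n := ⟨0, hn⟩ with hc0
  set u : Finset (Fin n) → List (Fin n) :=
    fun S => if S = ∅ then [] else c0 :: Sᶜ.toList with hu
  set v : Finset (Fin n) → List (Fin n) := fun T => T.toList with hv
  have hmem : ∀ S T : Finset (Fin n), ((u S ++ v T) ∈ M.accepts ↔ (S = ∅ ∨ ¬ S ⊆ T)) := by
    intro S T
    rw [hacc]
    by_cases hS : S = ∅
    · simp only [hu, hv, if_pos hS, List.nil_append]
      have hlen : (T.toList.tail).length < n := by
        have h1 : T.toList.length = T.card := Finset.length_toList T
        have h2 : T.card ≤ n := by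
          have := Finset.card_le_univ T
          simpa using this
        have h3 : T.toList.tail.length = T.toList.length - 1 := List.length_tail
        omega
      obtain ⟨b, hb⟩ := exists_not_mem_of_short _ hlen
      exact iff_of_true ⟨b, hb⟩ (Or.inl hS)
    · simp only [hu, hv, if_neg hS, List.cons_append]
      show (∃ b : Fin n, b ∉ (c0 :: (Sᶜ.toList ++ T.toList)).tail) ↔ _
      simp only [List.tail_cons]
      constructor
      · rintro ⟨b, hb⟩
        refine Or.inr (Finset.not_subset.2 ⟨b, ?_, ?_⟩)
        · by_contra hbS
          exact hb (List.mem_append.2 (Or.inl (Finset.mem_toList.2 (Finset.mem_compl.2 hbS))))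
        · intro hbT
          exact hb (List.mem_append.2 (Or.inr (Finset.mem_toList.2 hbT)))
      · rintro (h | h)
        · exact absurd h hS
        · obtain ⟨b, hbS, hbT⟩ := Finset.not_subset.1 h
          refine ⟨b, fun hmem => ?_⟩
          rcases List.mem_append.1 hmem with h' | h'
          · exact (Finset.mem_compl.1 (Finset.mem_toList.1 h')) hbS
          · exact hbT (Finset.mem_toList.1 h')
  set sV : σ → ℚ := fun p => if p ∈ M.start then 1 else 0 with hsV
  set fV : σ → ℚ := fun q => if q ∈ M.accept then 1 else 0 with hfV
  set A : Matrix (Finset (Fin n)) σ ℚ :=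
    Matrix.of fun S p => Matrix.vecMul sV (TQ M (u S)) p with hA
  set B : Matrix σ (Finset (Fin n)) ℚ :=
    Matrix.of fun p T => Matrix.mulVec (TQ M (v T)) fV p with hB
  have hAB : A * B = Gmat n := by
    ext S T
    rw [Matrix.mul_apply]
    have e0 : ∑ p : σ, A S p * B p T
        = dotProduct (Matrix.vecMul sV (TQ M (u S)))
            (Matrix.mulVec (TQ M (v T)) fV) := rfl
    rw [e0, ← Matrix.dotProduct_mulVec, Matrix.mulVec_mulVec, ← TQ_append,
      ← accCountQ, accCount_of_unambiguous M hU]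
    have e1 : Gmat n S T = if (S = ∅ ∨ ¬ S ⊆ T) then (1 : ℚ) else 0 := by
      by_cases h1 : S = ∅ <;> by_cases h2 : S ⊆ T <;> simp [Gmat, h1, h2]
    rw [e1, if_congr (hmem S T) rfl rfl]
    split_ifs <;> norm_num
  have hrank : (Gmat n).rank = 2 ^ n := by
    have hu' : IsUnit (Gmat n) := by
      refine ⟨⟨Gmat n, Gmat' n, Gmat_mul_Gmat' n, ?_⟩, rfl⟩
      rw [← mul_eq_one_comm]
      exact Gmat_mul_Gmat' n
    rw [Matrix.rank_of_isUnit _ hu', Fintype.card_finset, Fintype.card_fin]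
  calc 2 ^ n = (Gmat n).rank := hrank.symm
    _ = (A * B).rank := by rw [hAB]
    _ ≤ A.rank := Matrix.rank_mul_le_left A B
    _ ≤ Fintype.card σ := Matrix.rank_le_card_width A

lemma downClosure_eq (n : ℕ) (hn : 0 < n) :
    downClosure {x : List (Fin n) | ∃ (a : Fin n) (w : List (Fin n)), x = a :: w ∧ a ∉ w}
      = {x : List (Fin n) | ∃ b : Fin n, b ∉ x.tail} := by
  ext x
  constructor
  · rintro ⟨y, ⟨a, w, rfl, haw⟩, hsub⟩
    cases x with
    | nil => exact ⟨⟨0, hn⟩, by simp⟩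
    | cons c t =>
      refine ⟨a, fun hat => haw ?_⟩
      have ht : t.Sublist w := by
        cases hsub with
        | cons _ h => exact (List.sublist_cons_self c t).trans h
        | cons_cons _ h => exact h
      exact ht.subset hat
  · rintro ⟨b, hb⟩
    cases x with
    | nil => exact ⟨[b], ⟨b, [], rfl, by simp⟩, List.nil_sublist _⟩
    | cons c t =>
      have hb' : b ∉ t := hb
      by_cases hbc : b = c
      · exact ⟨c :: t, ⟨c, t, rfl, by rw [← hbc]; exact hb'⟩, List.Sublist.refl _⟩
      · refine ⟨b :: c :: t, ⟨b, c :: t, rfl, ?_⟩, List.sublist_cons_self b (c :: t)⟩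
        intro hm
        rcases List.mem_cons.1 hm with h | h
        · exact hbc h
        · exact hb' h

lemma M0_accepts (n : ℕ) (hn : 0 < n) :
    (M0 n hn).accepts = {x : List (Fin n) | ∃ b : Fin n, b ∉ x.tail} := by
  have hemp : (∅ : Finset (Fin n)) ≠ Finset.univ := by
    intro he
    haveI : Nonempty (Fin n) := ⟨⟨0, hn⟩⟩
    obtain ⟨x, hx⟩ := Finset.univ_nonempty (α := Fin n)
    rw [← he] at hx
    exact absurd hx (Finset.notMem_empty x)
  ext w
  have hacc : w ∈ (M0 n hn).accepts ↔ ((M0 n hn).eval w).Nonempty := by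
    show (∃ q ∈ (M0 n hn).accept, q ∈ (M0 n hn).eval w) ↔ _
    constructor
    · rintro ⟨q, _, hq⟩
      exact ⟨q, hq⟩
    · rintro ⟨q, hq⟩
      exact ⟨q, Set.mem_univ q, hq⟩
  rw [hacc]
  cases w with
  | nil =>
    simp only [NFA.eval_nil]
    exact iff_of_true ⟨none, rfl⟩ ⟨⟨0, hn⟩, by simp⟩
  | cons a t =>
    show ((M0 n hn).evalFrom ((M0 n hn).stepSet {none} a) t).Nonempty ↔ _
    rw [stepSet_singleton]
    have hstep : (M0 n hn).step none a = {some ⟨∅, hemp⟩} := rfl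
    rw [hstep, M0_evalFrom n hn t ∅ hemp]
    simp only [Finset.empty_union, Set.mem_setOf_eq, List.tail_cons]
    constructor
    · intro h
      obtain ⟨b, hb⟩ : ∃ b, b ∉ t.toFinset := by
        by_contra hall
        push_neg at hall
        exact h (Finset.eq_univ_iff_forall.2 hall)
      exact ⟨b, fun hm => hb (List.mem_toFinset.2 hm)⟩
    · rintro ⟨b, hb⟩ he
      have hbt : b ∈ t.toFinset := by rw [he]; exact Finset.mem_univ b
      exact hb (List.mem_toFinset.1 hbt)

lemma card_St (n : ℕ) : Fintype.card (St n) = 2 ^ n := by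
  rw [Fintype.card_option, Fintype.card_subtype]
  have hfil : (Finset.univ.filter (fun S : Finset (Fin n) => S ≠ Finset.univ))
      = Finset.univ.erase Finset.univ := by
    ext S
    simp [Finset.mem_erase, and_comm]
  rw [hfil, Finset.card_erase_of_mem (Finset.mem_univ _), Finset.card_univ,
    Fintype.card_finset, Fintype.card_fin]
  have : 1 ≤ 2 ^ n := Nat.one_le_two_pow
  omega

end MainAux

/-- Unambiguous state complexity of the downward-closed witness: over `Σ_n = Fin n`
(`n > 0`), with `D_n` the language of nonempty words whose first letter does not
reappear, every unambiguous automaton recognizing `↓D_n` has at least `2^n` states;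
in fact `nU(↓D_n) = 2^n`. -/
theorem nU_downClosure_D (n : ℕ) (hn : 0 < n) (D : Language (Fin n))
    (hD : D = {x | ∃ (a : Fin n) (w : List (Fin n)), x = a :: w ∧ a ∉ w}) :
    (∀ (σ : Type) [Fintype σ] (M : NFA (Fin n) σ),
      M.Unambiguous → M.accepts = downClosure D → 2 ^ n ≤ Fintype.card σ) ∧
    nU (downClosure D) = 2 ^ n := by
  have hchar : downClosure D = {x : List (Fin n) | ∃ b : Fin n, b ∉ x.tail} := by
    rw [hD]
    exact downClosure_eq n hn
  have hlow : ∀ (σ : Type) (inst : Fintype σ) (M : NFA (Fin n) σ),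
      M.Unambiguous → M.accepts = downClosure D → 2 ^ n ≤ @Fintype.card σ inst := by
    intro σ inst M hU hacc
    exact @lower_bound n hn σ inst M hU (by rw [hacc, hchar])
  constructor
  · intro σ inst M hU hacc
    exact hlow σ inst M hU hacc
  · have hmem : 2 ^ n ∈ {m | ∃ (σ : Type) (inst : Fintype σ) (M : NFA (Fin n) σ),
        M.Unambiguous ∧ @Fintype.card σ inst = m ∧ M.accepts = downClosure D} := by
      refine ⟨UpperAux.St n, inferInstance, UpperAux.M0 n hn,
        UpperAux.det_unambiguous _ (UpperAux.M0_det n hn), card_St n, ?_⟩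
      rw [M0_accepts n hn, hchar]
    refine le_antisymm (Nat.sInf_le hmem) (le_csInf ⟨_, hmem⟩ ?_)
    rintro m ⟨σ, inst, M, hU, hcard, hacc⟩
    rw [← hcard]
    exact hlow σ inst M hU hacc
end
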